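/- arXiv:2004.00593 — 3 statements merged into one kernel-verified Lean document; each statement's English description precedes it below -/
import Mathlib

section
/- Let G be a connected graph, let D₀, D₁, … be the distance classes of G with respect to an arbitrary fixed vertex of G (D_k is the set of vertices at distance exactly k from that vertex), and let n ≥ 1. Then for every infinite set U ⊆ D_n, the induced subgraph G[D₀ ∪ … ∪ D_n] contains a star attached to U. -/
/-! Basic notions for the theory of stars and combs in infinite graphs. -/

universe u

open SimpleGraph

namespace StarsCombs

variable {V : Type u} {ι : Type u}

/-- A ray in the graph `G`: an injective sequence of consecutively adjacent vertices. -/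
def IsRay (G : SimpleGraph V) (r : ℕ → V) : Prop :=
  Function.Injective r ∧ ∀ n, G.Adj (r n) (r (n + 1))

/-- The vertex `v` dominates the ray `r` in `G`: there is an infinite `v`–`(R − v)` fan,
i.e. infinitely many paths from `v` to pairwise distinct vertices of the ray other than `v`,
each meeting the ray only in its last vertex, and pairwise meeting only in `v`. -/
def Dominates (G : SimpleGraph V) (v : V) (r : ℕ → V) : Prop :=
  ∃ (t : ℕ → ℕ) (p : ∀ n, G.Walk v (r (t n))),
    Function.Injective t ∧ (∀ n, r (t n) ≠ v) ∧ (∀ n, (p n).IsPath) ∧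
    (∀ n w, w ∈ (p n).support → w ≠ v → w ∈ Set.range r → w = r (t n)) ∧
    (∀ m n, m ≠ n → ∀ w, w ∈ (p m).support → w ∈ (p n).support → w = v)

/-- A ray is undominated if no vertex dominates it. -/
def Undominated (G : SimpleGraph V) (r : ℕ → V) : Prop := ∀ v, ¬ Dominates G v r

/-- A comb attached to `U`: the union of a ray (the spine) with infinitely many pairwise
disjoint finite paths, possibly trivial, that have precisely their first vertex on the spine;
the last vertices of those paths (the teeth) all lie in `U`. -/
structure Comb (G : SimpleGraph V) (U : Set V) where
  spine : ℕ → V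
  spine_ray : IsRay G spine
  start : ℕ → ℕ
  tooth : ℕ → V
  tooth_mem : ∀ n, tooth n ∈ U
  path : ∀ n, G.Walk (spine (start n)) (tooth n)
  path_isPath : ∀ n, (path n).IsPath
  meets_spine : ∀ n w, w ∈ (path n).support → w ∈ Set.range spine → w = spine (start n)
  paths_disjoint : ∀ m n, m ≠ n → ∀ w, w ∈ (path m).support → w ∉ (path n).support

/-- A subdivided infinite star attached to `U`: a centre together with infinitely many
nontrivial paths from the centre to pairwise distinct leaves in `U`, any two of which meet
exactly in the centre. -/
structure Star (G : SimpleGraph V) (U : Set V) where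
  center : V
  leaf : ℕ → V
  leaf_mem : ∀ n, leaf n ∈ U
  leaf_ne : ∀ n, leaf n ≠ center
  path : ∀ n, G.Walk center (leaf n)
  path_isPath : ∀ n, (path n).IsPath
  paths_disjoint : ∀ m n, m ≠ n → ∀ w, w ∈ (path m).support → w ∈ (path n).support → w = center

/-- `G` contains a comb attached to `U`. -/
def HasComb (G : SimpleGraph V) (U : Set V) : Prop := Nonempty (Comb G U)

/-- `G` contains a star attached to `U`. -/
def HasStar (G : SimpleGraph V) (U : Set V) : Prop := Nonempty (Star G U)

/-- `G` contains a dominated comb attached to `U`: a comb attached to `U` whose spine is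
dominated by some vertex. -/
def HasDominatedComb (G : SimpleGraph V) (U : Set V) : Prop :=
  ∃ c : Comb G U, ∃ v, Dominates G v c.spine

/-- Two rays are equivalent (belong to the same end of `G`): for every finite vertex set `X`,
tails of the two rays lie in the same component of `G − X`. -/
def EquivRays (G : SimpleGraph V) (r s : ℕ → V) : Prop :=
  ∀ X : Set V, X.Finite → ∃ (m n : ℕ) (p : G.Walk (r m) (s n)),
    (∀ w ∈ p.support, w ∉ X) ∧ (∀ k, m ≤ k → r k ∉ X) ∧ (∀ k, n ≤ k → s k ∉ X)

/-- The end of the ray `r` lies in the closure of `U` in `G`: there is a comb attached to `U`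
whose spine is equivalent to `r`.  (As a predicate on rays, this describes the set `∂_Ω U` of
ends of `G` lying in the closure of `U`.) -/
def InClosure (G : SimpleGraph V) (U : Set V) (r : ℕ → V) : Prop :=
  ∃ c : Comb G U, EquivRays G c.spine r

/-- A vertex set is dispersed if there is no comb attached to it. -/
def Dispersed (G : SimpleGraph V) (D : Set V) : Prop := ¬ HasComb G D

/-! ### Rooted trees and normal trees inside a graph -/

/-- A rooted tree `T ⊆ G`: a subgraph of `G` that is a tree, with a root. -/
structure RootedTree (G : SimpleGraph V) where
  sub : G.Subgraph
  root : V
  root_mem : root ∈ sub.verts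
  isTree : sub.coe.IsTree

namespace RootedTree

variable {G : SimpleGraph V}

/-- The tree-order of a rooted tree: `x ≤ y` iff `x` lies on the (unique) path in the tree
from the root to `y`. -/
def tle (T : RootedTree G) (x y : V) : Prop :=
  ∃ (hx : x ∈ T.sub.verts) (hy : y ∈ T.sub.verts),
    ∀ p : T.sub.coe.Walk ⟨T.root, T.root_mem⟩ ⟨y, hy⟩, p.IsPath →
      (⟨x, hx⟩ : T.sub.verts) ∈ p.support

/-- A rooted tree `T ⊆ G` is normal in `G` if the endvertices of every `T`-path in `G`
(a nontrivial path meeting `T` exactly in its endvertices) are comparable in the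
tree-order of `T`. -/
def IsNormal (T : RootedTree G) : Prop :=
  ∀ ⦃a b : V⦄ (p : G.Walk a b), p.IsPath → 0 < p.length →
    a ∈ T.sub.verts → b ∈ T.sub.verts →
    (∀ w ∈ p.support, w ≠ a → w ≠ b → w ∉ T.sub.verts) →
    (T.tle a b ∨ T.tle b a)

/-- A ray of the tree `T`. -/
def IsRayIn (T : RootedTree G) (r : ℕ → V) : Prop :=
  Function.Injective r ∧ ∀ n, T.sub.Adj (r n) (r (n + 1))

/-- A normal ray of `T`: a ray of `T` starting at the root. -/
def IsNormalRay (T : RootedTree G) (r : ℕ → V) : Prop :=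
  T.IsRayIn r ∧ r 0 = T.root

/-- `T` contains `U` cofinally: `U ⊆ V(T)` and every node of `T` lies below some element
of `U` in the tree-order. -/
def ContainsCofinally (T : RootedTree G) (U : Set V) : Prop :=
  U ⊆ T.sub.verts ∧ ∀ t ∈ T.sub.verts, ∃ u ∈ U, T.tle t u

/-- `T` is rayless. -/
def Rayless (T : RootedTree G) : Prop := ¬ ∃ r, T.IsRayIn r

/-- `T` is locally finite. -/
def LocallyFinite (T : RootedTree G) : Prop := ∀ v, {w | T.sub.Adj v w}.Finite

/-- `T` is a spanning tree. -/
def Spanning (T : RootedTree G) : Prop := T.sub.verts = Set.univ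

end RootedTree

/-- Every component of `G − S` has finite neighbourhood (in `S`). -/
def CompFiniteNbhd (G : SimpleGraph V) (S : Set V) : Prop :=
  ∀ C : G.ComponentCompl S, {v ∈ S | ∃ w ∈ C.supp, G.Adj v w}.Finite

/-! ### Abstract (decomposition) trees -/

/-- Tree-order of the tree `T` with root `root`: `x ≤ y` iff `x` lies on every
root–`y` path. -/
def treeLE (T : SimpleGraph ι) (root x y : ι) : Prop :=
  ∀ p : T.Walk root y, p.IsPath → x ∈ p.support

/-- `k` lies on the same side of the edge `ij` as `j` (there is a `j`–`k` walk
avoiding `i`). -/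
def SameSide (T : SimpleGraph ι) (i j k : ι) : Prop :=
  ∃ p : T.Walk j k, i ∉ p.support

/-- The oriented edge `(i, j)` of the tree `T` points away from the root. -/
def PointsAway (T : SimpleGraph ι) (root i j : ι) : Prop :=
  T.Adj i j ∧ treeLE T root i j

/-- A ray of the (abstract) tree `T`. -/
def IsTreeRay (T : SimpleGraph ι) (R : ℕ → ι) : Prop :=
  Function.Injective R ∧ ∀ n, T.Adj (R n) (R (n + 1))

/-- The tree `T` is rayless. -/
def RaylessTree (T : SimpleGraph ι) : Prop := ¬ ∃ R, IsTreeRay T R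

/-- The tree `T` is locally finite. -/
def LocallyFiniteTree (T : SimpleGraph ι) : Prop := ∀ t, {s | T.Adj t s}.Finite

/-- `t` is a leaf of the tree `T` (it has at most one neighbour). -/
def IsLeafNode (T : SimpleGraph ι) (t : ι) : Prop := {s | T.Adj t s}.Subsingleton

/-- The sequence `r` eventually lies in `S`. -/
def EventuallyIn (r : ℕ → V) (S : Set V) : Prop := ∃ N, ∀ n, N ≤ n → r n ∈ S

/-- Two rays share a tail (and hence belong to the same end of a tree). -/
def ShareTail {α : Type*} (R S : ℕ → α) : Prop := ∃ m n, ∀ k, R (m + k) = S (n + k)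

/-- The natural order on oriented edges of a tree: `(i,j) ≤ (k,l)` iff they are equal or
there is a `j`–`k` path avoiding both `i` and `l`. -/
def OEdgeLE (T : SimpleGraph ι) (i j k l : ι) : Prop :=
  (i = k ∧ j = l) ∨ ∃ p : T.Walk j k, p.IsPath ∧ i ∉ p.support ∧ l ∉ p.support

/-! ### Tree-decompositions -/

/-- A tree-decomposition of `G` with decomposition tree on node set `ι`. -/
structure TreeDecomp (G : SimpleGraph V) (ι : Type u) where
  tree : SimpleGraph ι
  isTree : tree.IsTree
  part : ι → Set V
  covers : ∀ v : V, ∃ i, v ∈ part i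
  covers_adj : ∀ ⦃u v : V⦄, G.Adj u v → ∃ i, u ∈ part i ∧ v ∈ part i
  parts_connected : ∀ (v : V) (i j : ι), v ∈ part i → v ∈ part j →
    ∀ p : tree.Walk i j, p.IsPath → ∀ k ∈ p.support, v ∈ part k

namespace TreeDecomp

variable {G : SimpleGraph V} (D : TreeDecomp G ι)

/-- The separator (adhesion set) associated with the edge `ij` of the decomposition tree. -/
def sep (i j : ι) : Set V := D.part i ∩ D.part j

/-- All separators are finite. -/
def FinSeps : Prop := ∀ i j, D.tree.Adj i j → (D.sep i j).Finite

/-- All separators are connected (they induce connected subgraphs of `G`). -/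
def ConnSeps : Prop := ∀ i j, D.tree.Adj i j → (G.induce (D.sep i j)).Connected

/-- The separators are pairwise disjoint. -/
def PairwiseDisjointSeps : Prop :=
  ∀ i j k l, D.tree.Adj i j → D.tree.Adj k l → s(i, j) ≠ s(k, l) →
    Disjoint (D.sep i j) (D.sep k l)

/-- The union of the parts on the `j`-side of the edge `ij`. -/
def sideSet (i j : ι) : Set V := {v | ∃ k, SameSide D.tree i j k ∧ v ∈ D.part k}

/-- The end of `G` represented by the ray `r` lives at node `t`: for every edge of the
decomposition tree, `r` eventually lies on the side of the edge containing `t`. -/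
def LivesAt (r : ℕ → V) (t : ι) : Prop :=
  ∀ i j, D.tree.Adj i j → SameSide D.tree i j t → EventuallyIn r (D.sideSet i j)

/-- The end of `G` represented by the ray `r` corresponds to the end of the decomposition
tree represented by the tree-ray `R`. -/
def CorrespondsTo (r : ℕ → V) (R : ℕ → ι) : Prop :=
  ∀ n, EventuallyIn r (D.sideSet (R n) (R (n + 1)))

/-- The tree-decomposition displays the set `Ψ` of ends of `G` (given as a predicate on
rays, closed under equivalence): the canonical map sends ends not in `Ψ` to nodes of the
tree, and restricts to a bijection between `Ψ` and the set of ends of the tree. -/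
def Displays (Ψ : (ℕ → V) → Prop) : Prop :=
  (∀ r, IsRay G r → ¬ Ψ r → ∃ t, D.LivesAt r t) ∧
  (∀ r, IsRay G r → Ψ r → ∃ R, IsTreeRay D.tree R ∧ D.CorrespondsTo r R) ∧
  (∀ r s R R', IsRay G r → IsRay G s → Ψ r → Ψ s →
    IsTreeRay D.tree R → IsTreeRay D.tree R' →
    D.CorrespondsTo r R → D.CorrespondsTo s R' →
    (EquivRays G r s ↔ ShareTail R R')) ∧
  (∀ R, IsTreeRay D.tree R → ∃ r, IsRay G r ∧ Ψ r ∧ D.CorrespondsTo r R)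

end TreeDecomp

/-- A rooted tree-decomposition. -/
structure RootedTreeDecomp (G : SimpleGraph V) (ι : Type u) extends TreeDecomp G ι where
  root : ι

namespace RootedTreeDecomp

variable {G : SimpleGraph V} (D : RootedTreeDecomp G ι)

/-- The separators are upwards disjoint: for every two distinct edges `e < f` pointing away
from the root, the associated separators are disjoint. -/
def UpwardsDisjointSeps : Prop :=
  ∀ i j k l, PointsAway D.tree D.root i j → PointsAway D.tree D.root k l →
    (i, j) ≠ (k, l) → treeLE D.tree D.root j k →
    Disjoint (D.sep i j) (D.sep k l)

/-- The separators are essentially disjoint: some set `F` of edges of the decomposition tree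
meets every ray of the tree infinitely often and the separators associated with the edges in
`F` are upwards disjoint. -/
def EssentiallyDisjointSeps : Prop :=
  ∃ F : Set (ι × ι),
    (∀ e ∈ F, PointsAway D.tree D.root e.1 e.2) ∧
    (∀ R, IsTreeRay D.tree R →
      {n | (R n, R (n + 1)) ∈ F ∨ (R (n + 1), R n) ∈ F}.Infinite) ∧
    (∀ e f, e ∈ F → f ∈ F → e ≠ f → treeLE D.tree D.root e.2 f.1 →
      Disjoint (D.sep e.1 e.2) (D.sep f.1 f.2))

/-- The tree-decomposition covers `W` cofinally: every vertex of `W` lies in some part, and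
the set of nodes whose parts meet `W` is cofinal in the tree-order. -/
def CoversCofinally (W : Set V) : Prop :=
  (∀ w ∈ W, ∃ t, w ∈ D.part t) ∧
  ∀ t, ∃ s, treeLE D.tree D.root t s ∧ (D.part s ∩ W).Nonempty

end RootedTreeDecomp

/-! ### `S_ℵ₀`-trees -/

/-- A (rooted) `S_ℵ₀`-tree over `G`: a tree together with a map from oriented edges to
separations of `G` of finite order, commuting with reversal and order-preserving.  The
oriented edge `(i, j)` is mapped to the separation `(B j i, B i j)`, where `B i j` is the
side towards `j`. -/
structure SepTree (G : SimpleGraph V) (ι : Type u) where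
  tree : SimpleGraph ι
  isTree : tree.IsTree
  root : ι
  B : ι → ι → Set V
  union_eq : ∀ i j, tree.Adj i j → B i j ∪ B j i = Set.univ
  isSep : ∀ i j, tree.Adj i j → ∀ u v, G.Adj u v →
    u ∈ B i j \ B j i → v ∉ B j i \ B i j
  finOrder : ∀ i j, tree.Adj i j → (B i j ∩ B j i).Finite
  mono : ∀ i j k l, tree.Adj i j → tree.Adj k l → OEdgeLE tree i j k l → B k l ⊆ B i j

namespace SepTree

variable {G : SimpleGraph V} (S : SepTree G ι)

/-- The separator of the edge `ij`. -/
def sep (i j : ι) : Set V := S.B i j ∩ S.B j i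

/-- Upwards disjoint separators. -/
def UpwardsDisjointSeps : Prop :=
  ∀ i j k l, PointsAway S.tree S.root i j → PointsAway S.tree S.root k l →
    (i, j) ≠ (k, l) → treeLE S.tree S.root j k → Disjoint (S.sep i j) (S.sep k l)

/-- Upwards connected: for every edge pointing away from the root, the big side induces a
connected subgraph. -/
def UpwardsConnected : Prop :=
  ∀ i j, PointsAway S.tree S.root i j → (G.induce (S.B i j)).Connected

/-- The end represented by the ray `r` corresponds to the end of the tree represented by the
tree-ray `R`: for every oriented edge of the ray pointing away from the root, with associated
separation `(A, B)`, the end lives in `G[B \ A]`. -/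
def CorrespondsTo (r : ℕ → V) (R : ℕ → ι) : Prop :=
  ∀ n, PointsAway S.tree S.root (R n) (R (n + 1)) →
    EventuallyIn r (S.B (R n) (R (n + 1)) \ S.B (R (n + 1)) (R n))

/-- The end represented by `r` lives at the node `t`. -/
def LivesAt (r : ℕ → V) (t : ι) : Prop :=
  ∀ i j, S.tree.Adj i j → SameSide S.tree i j t →
    EventuallyIn r (S.B i j \ S.B j i)

/-- The `S_ℵ₀`-tree displays the set `Ψ` of ends of `G`. -/
def Displays (Ψ : (ℕ → V) → Prop) : Prop :=
  (∀ r, IsRay G r → ¬ Ψ r → ∃ t, S.LivesAt r t) ∧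
  (∀ r, IsRay G r → Ψ r → ∃ R, IsTreeRay S.tree R ∧ S.CorrespondsTo r R) ∧
  (∀ r s R R', IsRay G r → IsRay G s → Ψ r → Ψ s →
    IsTreeRay S.tree R → IsTreeRay S.tree R' →
    S.CorrespondsTo r R → S.CorrespondsTo s R' →
    (EquivRays G r s ↔ ShareTail R R')) ∧
  (∀ R, IsTreeRay S.tree R → ∃ r, IsRay G r ∧ Ψ r ∧ S.CorrespondsTo r R)

end SepTree


section AuxStar

/-- Lift a walk in `G` with support in `S` to a walk in `G.induce S`. -/
def liftWalk {G : SimpleGraph V} {S : Set V} :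
    ∀ {a b : V} (p : G.Walk a b) (_ : ∀ w ∈ p.support, w ∈ S),
      (G.induce S).Walk ⟨a, by exact ‹∀ w ∈ p.support, w ∈ S› a p.start_mem_support⟩
        ⟨b, by exact ‹∀ w ∈ p.support, w ∈ S› b p.end_mem_support⟩
  | _, _, .nil, _ => .nil
  | _, _, @SimpleGraph.Walk.cons _ _ _ x _ adj q, h =>
      .cons (show (G.induce S).Adj _ ⟨x, h x (by simp)⟩ from adj)
        (liftWalk q (fun w hw => h w (by simp [hw])))

lemma support_liftWalk {G : SimpleGraph V} {S : Set V} :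
    ∀ {a b : V} (p : G.Walk a b) (h : ∀ w ∈ p.support, w ∈ S),
      (liftWalk p h).support.map Subtype.val = p.support
  | _, _, .nil, _ => rfl
  | _, _, .cons adj q, h => by
      simp only [liftWalk, Walk.support_cons, List.map_cons, List.cons.injEq, true_and]
      exact support_liftWalk q _

lemma mem_support_liftWalk {G : SimpleGraph V} {S : Set V} {a b : V}
    {p : G.Walk a b} {h : ∀ w ∈ p.support, w ∈ S} {x : S} :
    x ∈ (liftWalk p h).support ↔ (x : V) ∈ p.support := by
  rw [← support_liftWalk p h, List.mem_map]
  constructor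
  · intro hx; exact ⟨x, hx, rfl⟩
  · rintro ⟨y, hy, hyx⟩; rwa [Subtype.val_injective hyx] at hy

lemma isPath_liftWalk {G : SimpleGraph V} {S : Set V} {a b : V}
    {p : G.Walk a b} (hp : p.IsPath) (h : ∀ w ∈ p.support, w ∈ S) :
    (liftWalk p h).IsPath := by
  rw [Walk.isPath_def]
  have hnd := (Walk.isPath_def p).mp hp
  rw [← support_liftWalk p h] at hnd
  exact hnd.of_map _

/-- Key auxiliary lemma: a star attached to an infinite subset of a distance class,
phrased with plain walks in `G` whose supports stay within distance `n`. -/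
lemma aux_star (G : SimpleGraph V) (hG : G.Connected) (v₀ : V) :
    ∀ (n : ℕ) (U : Set V), U.Infinite → (∀ u ∈ U, G.dist v₀ u = n) →
    ∃ (c : V) (leaf : ℕ → V) (p : ∀ k, G.Walk c (leaf k)),
      (∀ k, leaf k ∈ U) ∧ (∀ k, leaf k ≠ c) ∧ (∀ k, (p k).IsPath) ∧
      (∀ k w, w ∈ (p k).support → G.dist v₀ w ≤ n) ∧
      (∀ m k, m ≠ k → ∀ w, w ∈ (p m).support → w ∈ (p k).support → w = c) := by
  intro n
  induction n with
  | zero =>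
    intro U hU hUn
    exfalso
    apply hU
    have hsub : U ⊆ {v₀} := by
      intro u hu
      have h0 := hUn u hu
      rw [hG.dist_eq_zero_iff] at h0
      simp [h0.symm]
    exact Set.Finite.subset (Set.finite_singleton v₀) hsub
  | succ n ih =>
    intro U hU hUn
    -- every u ∈ U has a neighbour at distance n
    have hpred : ∀ u ∈ U, ∃ w, G.Adj u w ∧ G.dist v₀ w = n := by
      intro u hu
      obtain ⟨q, hq⟩ := (hG v₀ u).exists_walk_length_eq_dist
      rw [hUn u hu] at hq
      cases hqr : q.reverse with
      | nil =>
        exfalso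
        have hlen := congrArg Walk.length hqr
        rw [Walk.length_reverse] at hlen
        simp [hq] at hlen
      | @cons _ x _ adj r =>
        refine ⟨_, adj, le_antisymm ?_ ?_⟩
        · have hlen : r.length = n := by
            have hlen' := congrArg Walk.length hqr
            rw [Walk.length_reverse, hq] at hlen'
            simpa using hlen'.symm
          have hle := dist_le r.reverse
          rwa [Walk.length_reverse, hlen] at hle
        · by_contra hlt
          push_neg at hlt
          have htri : G.dist v₀ u ≤ G.dist v₀ x + 1 := by
            obtain ⟨s, hs⟩ := (hG v₀ x).exists_walk_length_eq_dist
            have hle := dist_le (s.concat adj.symm)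
            rwa [Walk.length_concat, hs] at hle
          have hdu := hUn u hu
          omega
    classical
    -- choose predecessors
    set f : V → V := fun u =>
      if h : ∃ w, G.Adj u w ∧ G.dist v₀ w = n then h.choose else v₀ with hf
    have hfadj : ∀ u ∈ U, G.Adj u (f u) ∧ G.dist v₀ (f u) = n := by
      intro u hu
      have h := hpred u hu
      simp only [hf, dif_pos h]
      exact h.choose_spec
    by_cases hbig : ∃ w, {u ∈ U | f u = w}.Infinite
    · -- a single predecessor works: star of single edges
      obtain ⟨w, hw⟩ := hbig
      have e := hw.natEmbedding
      have heU : ∀ k, (e k : V) ∈ U := fun k => (e k).2.1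
      have hef : ∀ k, f (e k : V) = w := fun k => (e k).2.2
      have hadj : ∀ k, G.Adj w (e k : V) := by
        intro k
        have ha := (hfadj _ (heU k)).1
        rw [hef k] at ha
        exact ha.symm
      have hdw : G.dist v₀ w = n := by
        obtain ⟨u', hu'⟩ := hw.nonempty
        have hd := (hfadj u' hu'.1).2
        rwa [hu'.2] at hd
      have hne : ∀ k, (e k : V) ≠ w := by
        intro k h
        have hd := hUn _ (heU k)
        rw [h, hdw] at hd
        omega
      refine ⟨w, fun k => e k, fun k => Walk.cons (hadj k) Walk.nil, heU, hne, ?_, ?_, ?_⟩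
      · intro k
        apply Walk.IsPath.cons Walk.IsPath.nil
        simp only [Walk.support_nil, List.mem_singleton]
        exact fun h => (hne k) h.symm
      · intro k v hv
        simp only [Walk.support_cons, Walk.support_nil, List.mem_cons,
          List.mem_singleton, List.not_mem_nil, or_false] at hv
        rcases hv with h | h
        · rw [h, hdw]; omega
        · rw [h, hUn _ (heU k)]
      · intro m k hmk v hvm hvk
        simp only [Walk.support_cons, Walk.support_nil, List.mem_cons,
          List.mem_singleton, List.not_mem_nil, or_false] at hvm hvk
        rcases hvm with h1 | h1
        · exact h1
        · rcases hvk with h2 | h2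
          · exact h2
          · exfalso
            exact hmk (e.injective (Subtype.ext (h1 ▸ h2)))
    · -- all fibres finite: pass to image and use induction hypothesis
      push_neg at hbig
      have hU' : (f '' U).Infinite := by
        intro hfin
        apply hU
        have hsub : U ⊆ ⋃ w ∈ f '' U, {u ∈ U | f u = w} := by
          intro u hu
          simp only [Set.mem_iUnion]
          exact ⟨f u, ⟨u, hu, rfl⟩, hu, rfl⟩
        exact Set.Finite.subset
          (Set.Finite.biUnion hfin (fun w _ => hbig w)) hsub
      have hU'n : ∀ w ∈ f '' U, G.dist v₀ w = n := by
        rintro w ⟨u, hu, rfl⟩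
        exact (hfadj u hu).2
      obtain ⟨c, leaf', p', hmem', hne', hpath', hdist', hdisj'⟩ := ih (f '' U) hU' hU'n
      have hleafinj : Function.Injective leaf' := by
        intro m k hmk
        by_contra hne
        have h1 : leaf' m ∈ (p' m).support := Walk.end_mem_support _
        have h2 : leaf' m ∈ (p' k).support := by rw [hmk]; exact Walk.end_mem_support _
        exact hne' m (hdisj' m k hne _ h1 h2)
      have hpre : ∀ k, ∃ u ∈ U, f u = leaf' k := by
        intro k
        obtain ⟨u, hu, hfu⟩ := hmem' k
        exact ⟨u, hu, hfu⟩
      choose uu huuU huuf using hpre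
      have huuinj : Function.Injective uu := by
        intro m k h
        apply hleafinj
        rw [← huuf m, ← huuf k, h]
      have hadjk : ∀ k, G.Adj (leaf' k) (uu k) := by
        intro k
        have ha := (hfadj _ (huuU k)).1
        rw [huuf k] at ha
        exact ha.symm
      have hdu : ∀ k, G.dist v₀ (uu k) = n + 1 := fun k => hUn _ (huuU k)
      have hnotin : ∀ m k, uu m ∉ (p' k).support := by
        intro m k hk
        have h1 := hdist' k _ hk
        have h2 := hdu m
        omega
      refine ⟨c, uu, fun k => (Walk.cons (hadjk k).symm (p' k).reverse).reverse,
        huuU, ?_, ?_, ?_, ?_⟩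
      · intro k hk
        have hc : c ∈ (p' k).support := Walk.start_mem_support _
        have h1 := hdist' k c hc
        have h2 := hdu k
        rw [hk] at h2
        omega
      · intro k
        apply Walk.IsPath.reverse
        apply Walk.IsPath.cons ((hpath' k).reverse)
        rw [Walk.support_reverse, List.mem_reverse]
        exact hnotin k k
      · intro k v hv
        rw [Walk.support_reverse, List.mem_reverse, Walk.support_cons, List.mem_cons] at hv
        rcases hv with h | h
        · rw [h, hdu k]
        · rw [Walk.support_reverse, List.mem_reverse] at h
          exact le_trans (hdist' k v h) (Nat.le_succ n)
      · intro m k hmk v hvm hvk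
        rw [Walk.support_reverse, List.mem_reverse, Walk.support_cons, List.mem_cons] at hvm hvk
        rcases hvm with h1 | h1
        · exfalso
          rcases hvk with h2 | h2
          · exact hmk (huuinj (h1 ▸ h2 : uu m = uu k))
          · rw [Walk.support_reverse, List.mem_reverse] at h2
            rw [h1] at h2
            exact hnotin m k h2
        · rcases hvk with h2 | h2
          · exfalso
            rw [Walk.support_reverse, List.mem_reverse] at h1
            rw [h2] at h1
            exact hnotin k m h1
          · rw [Walk.support_reverse, List.mem_reverse] at h1 h2
            exact hdisj' m k hmk v h1 h2

end AuxStar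

/-- Let `G` be a connected graph, let `D₀, D₁, …` be the distance classes of `G` with
respect to an arbitrary fixed vertex `v₀`, and let `n ≥ 1`.  Then for every infinite
`U ⊆ Dₙ` the induced subgraph `G[D₀ ∪ … ∪ Dₙ]` contains a star attached to `U`
(Lemma 2.7). -/
theorem star_in_initial_distance_classes {V : Type u} (G : SimpleGraph V)
    (hG : G.Connected) (v₀ : V) (n : ℕ) (hn : 1 ≤ n) (U : Set V)
    (hU : U.Infinite) (hUn : ∀ u ∈ U, G.dist v₀ u = n) :
    HasStar (G.induce {v | G.dist v₀ v ≤ n})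
      (Subtype.val ⁻¹' U : Set {v | G.dist v₀ v ≤ n}) := by
  obtain ⟨c, leaf, p, hmem, hne, hpath, hdist, hdisj⟩ := aux_star G hG v₀ n U hU hUn
  have hsupp : ∀ k, ∀ w ∈ (p k).support, w ∈ {v | G.dist v₀ v ≤ n} :=
    fun k w hw => hdist k w hw
  exact ⟨{
    center := ⟨c, hsupp 0 c (p 0).start_mem_support⟩
    leaf := fun k => ⟨leaf k, hsupp k _ (p k).end_mem_support⟩
    leaf_mem := fun k => hmem k
    leaf_ne := fun k h => hne k (congrArg Subtype.val h)
    path := fun k => liftWalk (p k) (hsupp k)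
    path_isPath := fun k => isPath_liftWalk (hpath k) (hsupp k)
    paths_disjoint := fun m k hmk w hwm hwk =>
      Subtype.ext (hdisj m k hmk w.val
        (mem_support_liftWalk.mp hwm) (mem_support_liftWalk.mp hwk)) }⟩

end StarsCombs
end

section
/- Let G be any connected graph and let U be any set of vertices of G. Then exactly one of the following holds: (i) G contains a comb attached to U; (ii) G has a rayless tree-decomposition into parts each containing at most finitely many vertices from U and whose parts at non-leaves of the decomposition tree are all finite. Moreover, the tree-decomposition in (ii) can be chosen with connected separators. -/
/-! Basic notions for the theory of stars and combs in infinite graphs. -/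

universe u

open SimpleGraph

namespace StarsCombs

variable {V : Type u} {ι : Type u}

section Helpers

variable {α : Type*} {T : SimpleGraph α}

lemma loop_path_nil {v : α} (p : T.Walk v v) (hp : p.IsPath) : p = SimpleGraph.Walk.nil := by
  cases p with
  | nil => rfl
  | cons h q =>
    exfalso
    rw [SimpleGraph.Walk.cons_isPath_iff] at hp
    exact hp.2 (q.end_mem_support)

lemma path_support_subset_walk (hT : T.IsAcyclic) {a b : α} (p : T.Walk a b) (hp : p.IsPath)
    (q : T.Walk a b) : p.support ⊆ q.support := by
  classical
  have h1 : p = (q.toPath : T.Walk a b) := by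
    have := SimpleGraph.isAcyclic_iff_path_unique.mp hT (⟨p, hp⟩ : T.Path a b) q.toPath
    simpa using congrArg Subtype.val this
  rw [h1]
  exact SimpleGraph.Walk.support_toPath_subset q

end Helpers

section ParentTree

variable {α : Type*}

/-- The graph associated with a parent function. -/
def ptGraph (f : α → α) : SimpleGraph α where
  Adj x y := x ≠ y ∧ (f x = y ∨ f y = x)
  symm := ⟨by rintro x y ⟨h1, h2⟩; exact ⟨h1.symm, h2.symm⟩⟩
  loopless := ⟨by rintro x ⟨h1, _⟩; exact h1 rfl⟩

lemma ptGraph_adj {f : α → α} {x y : α} :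
    (ptGraph f).Adj x y ↔ x ≠ y ∧ (f x = y ∨ f y = x) := Iff.rfl

/-- Fixed points must be the root. -/
lemma pt_fix (f : α → α) (root : α) (hreach : ∀ v, ∃ n, f^[n] v = root)
    (v : α) (hv : f v = v) : v = root := by
  obtain ⟨n, hn⟩ := hreach v
  have : f^[n] v = v := Function.iterate_fixed hv n
  rw [this] at hn; exact hn

noncomputable def ptDepth (f : α → α) (root : α) (hreach : ∀ v, ∃ n, f^[n] v = root)
    (v : α) : ℕ :=
  @Nat.find (fun n => f^[n] v = root) (Classical.decPred _) (hreach v)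

lemma ptDepth_spec (f : α → α) (root : α) (hreach : ∀ v, ∃ n, f^[n] v = root) (v : α) :
    f^[ptDepth f root hreach v] v = root :=
  @Nat.find_spec (fun n => f^[n] v = root) (Classical.decPred _) (hreach v)

lemma ptDepth_min (f : α → α) (root : α) (hreach : ∀ v, ∃ n, f^[n] v = root) {v : α} {m : ℕ}
    (hm : m < ptDepth f root hreach v) : f^[m] v ≠ root :=
  @Nat.find_min (fun n => f^[n] v = root) (Classical.decPred _) (hreach v) _ hm

lemma ptDepth_le (f : α → α) (root : α) (hreach : ∀ v, ∃ n, f^[n] v = root) {v : α} {m : ℕ}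
    (hm : f^[m] v = root) : ptDepth f root hreach v ≤ m :=
  @Nat.find_le _ (fun n => f^[n] v = root) (Classical.decPred _) (hreach v) hm

lemma ptDepth_eq_zero_iff (f : α → α) (root : α) (hreach : ∀ v, ∃ n, f^[n] v = root) {v : α} :
    ptDepth f root hreach v = 0 ↔ v = root := by
  constructor
  · intro h
    have := ptDepth_spec f root hreach v
    rw [h] at this; simpa using this
  · intro h
    have : ptDepth f root hreach v ≤ 0 := ptDepth_le f root hreach (by simpa using h)
    omega

lemma ptDepth_f (f : α → α) (root : α) (hreach : ∀ v, ∃ n, f^[n] v = root) {v : α}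
    (hv : v ≠ root) : ptDepth f root hreach (f v) + 1 = ptDepth f root hreach v := by
  have h0 : 0 < ptDepth f root hreach v := by
    rcases Nat.eq_zero_or_pos (ptDepth f root hreach v) with h | h
    · exact absurd ((ptDepth_eq_zero_iff f root hreach).mp h) hv
    · exact h
  have hle : ptDepth f root hreach (f v) ≤ ptDepth f root hreach v - 1 := by
    apply ptDepth_le
    have : f^[ptDepth f root hreach v - 1] (f v) = f^[ptDepth f root hreach v] v := by
      rw [← Function.iterate_succ_apply, Nat.succ_eq_add_one, Nat.sub_add_cancel h0]
    rw [this]; exact ptDepth_spec f root hreach v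
  have hge : ptDepth f root hreach v ≤ ptDepth f root hreach (f v) + 1 := by
    apply ptDepth_le
    rw [Function.iterate_succ_apply]
    exact ptDepth_spec f root hreach (f v)
  omega

lemma ptDepth_iterate (f : α → α) (root : α) (hreach : ∀ v, ∃ n, f^[n] v = root) {v : α} {n : ℕ}
    (hn : n ≤ ptDepth f root hreach v) :
    ptDepth f root hreach (f^[n] v) = ptDepth f root hreach v - n := by
  revert hn
  induction n with
  | zero => intro _; simp
  | succ k ih =>
    intro hn
    have hk : k ≤ ptDepth f root hreach v := by omega
    have hkv : f^[k] v ≠ root := ptDepth_min f root hreach (by omega)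
    have h2 := ptDepth_f f root hreach hkv
    rw [← Function.iterate_succ_apply' f k v] at h2
    simp only [Nat.succ_eq_add_one] at h2
    have h3 := ih hk
    omega

lemma pt_walkIter (f : α → α) (v : α) (n : ℕ) (hst : ∀ i < n, f^[i] v ≠ f^[i+1] v) :
    ∃ w : (ptGraph f).Walk v (f^[n] v), ∀ z ∈ w.support, ∃ i ≤ n, z = f^[i] v := by
  induction n with
  | zero =>
    refine ⟨SimpleGraph.Walk.nil, ?_⟩
    intro z hz
    change z ∈ [v] at hz
    simp only [SimpleGraph.Walk.support_nil, List.mem_singleton] at hz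
    exact ⟨0, by omega, by simpa using hz⟩
  | succ k ih =>
    obtain ⟨w, hw⟩ := ih (fun i hi => hst i (by omega))
    have hadj : (ptGraph f).Adj (f^[k] v) (f^[k+1] v) := by
      refine ⟨hst k (by omega), Or.inl ?_⟩
      rw [← Function.iterate_succ_apply' f k v]
    refine ⟨w.concat hadj, ?_⟩
    intro z hz
    rw [SimpleGraph.Walk.support_concat, List.mem_append] at hz
    rcases hz with hz | hz
    · obtain ⟨i, hi, rfl⟩ := hw z hz; exact ⟨i, by omega, rfl⟩
    · exact ⟨k+1, le_refl _, by simpa using hz⟩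

lemma pt_nostall (f : α → α) (root : α) (hreach : ∀ v, ∃ n, f^[n] v = root) {v : α} {i : ℕ}
    (hi : i < ptDepth f root hreach v) : f^[i] v ≠ f^[i+1] v := by
  intro h
  have h2 : f (f^[i] v) = f^[i] v := by
    conv_lhs => rw [← Function.iterate_succ_apply' f i v]
    exact h.symm
  exact (ptDepth_min f root hreach hi) (pt_fix f root hreach _ h2)

lemma pt_walk_to_root (f : α → α) (root : α) (hreach : ∀ v, ∃ n, f^[n] v = root) (v : α) :
    Nonempty ((ptGraph f).Walk v root) := by
  obtain ⟨w, -⟩ := pt_walkIter f v (ptDepth f root hreach v)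
    (fun i hi => pt_nostall f root hreach hi)
  rw [ptDepth_spec f root hreach v] at w
  exact ⟨w⟩

lemma ptGraph_connected (f : α → α) (root : α) (hreach : ∀ v, ∃ n, f^[n] v = root) :
    (ptGraph f).Connected := by
  have : Nonempty α := ⟨root⟩
  rw [SimpleGraph.connected_iff]
  refine ⟨fun x y => ?_, inferInstance⟩
  obtain ⟨wx⟩ := pt_walk_to_root f root hreach x
  obtain ⟨wy⟩ := pt_walk_to_root f root hreach y
  exact ⟨wx.append wy.reverse⟩

lemma pt_adj_down (f : α → α) (root : α) (hroot : f root = root)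
    (hreach : ∀ v, ∃ n, f^[n] v = root) {x y : α} (h : (ptGraph f).Adj x y)
    (hd : ptDepth f root hreach y ≤ ptDepth f root hreach x) : f x = y := by
  rcases h.2 with h2 | h2
  · exact h2
  · exfalso
    have hyr : y ≠ root := by
      intro hy; subst hy; rw [hroot] at h2; exact h.1 h2.symm
    have := ptDepth_f f root hreach hyr
    rw [h2] at this
    omega

lemma ptGraph_acyclic (f : α → α) (root : α) (hroot : f root = root)
    (hreach : ∀ v, ∃ n, f^[n] v = root) : (ptGraph f).IsAcyclic := by
  classical
  intro v p hp
  have hne : v ∈ p.support := p.start_mem_support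
  obtain ⟨x, hx, hmax⟩ := p.support.toFinset.exists_max_image (ptDepth f root hreach)
    ⟨v, List.mem_toFinset.mpr hne⟩
  rw [List.mem_toFinset] at hx
  have hmax' : ∀ y ∈ p.support, ptDepth f root hreach y ≤ ptDepth f root hreach x :=
    fun y hy => hmax y (List.mem_toFinset.mpr hy)
  have hp' : (p.rotate x hx).IsCycle := hp.rotate hx
  have hsub : ∀ y ∈ (p.rotate x hx).support, y ∈ p.support := by
    intro y hy
    rw [SimpleGraph.Walk.support_eq_cons] at hy
    rcases List.mem_cons.mp hy with rfl | hy
    · exact hx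
    · have := (SimpleGraph.Walk.support_rotate p x hx).mem_iff.mp hy
      rw [SimpleGraph.Walk.support_eq_cons p]
      exact List.mem_cons_of_mem _ this
  set p' := p.rotate x hx with hp'def
  clear_value p'
  clear hp'def
  cases p' with
  | nil => simpa using hp'.three_le_length
  | @cons _ b _ h q =>
    have hq : q.IsPath := by
      rw [SimpleGraph.Walk.isPath_def]
      have h2 := hp'.2
      simpa using h2
    have hb : f x = b := by
      apply pt_adj_down f root hroot hreach h
      apply hmax'
      apply hsub
      rw [SimpleGraph.Walk.support_cons]
      exact List.mem_cons_of_mem _ q.start_mem_support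
    have hxb : x ≠ b := h.ne
    obtain ⟨z, hxz, q3, hq3⟩ := SimpleGraph.Walk.exists_eq_cons_of_ne hxb q.reverse
    have hz : f x = z := by
      apply pt_adj_down f root hroot hreach hxz
      apply hmax'
      apply hsub
      rw [SimpleGraph.Walk.support_cons]
      apply List.mem_cons_of_mem
      have h3 : z ∈ q.reverse.support := by
        rw [hq3, SimpleGraph.Walk.support_cons]; exact List.mem_cons_of_mem _ q3.start_mem_support
      rw [SimpleGraph.Walk.support_reverse] at h3
      exact List.mem_reverse.mp h3
    have hzb : z = b := by rw [← hb, ← hz]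
    subst hzb
    have hq3path : q3.IsPath := by
      have h4 : q.reverse.IsPath := hq.reverse
      rw [hq3, SimpleGraph.Walk.cons_isPath_iff] at h4
      exact h4.1
    have h5 : q3 = SimpleGraph.Walk.nil := loop_path_nil q3 hq3path
    subst h5
    have hlen : q.length = 1 := by
      have h6 : q.reverse.length = 1 := by rw [hq3]; simp
      rw [SimpleGraph.Walk.length_reverse] at h6
      exact h6
    have h7 := hp'.three_le_length
    simp [SimpleGraph.Walk.length_cons, hlen] at h7

lemma ptGraph_isTree (f : α → α) (root : α) (hroot : f root = root)
    (hreach : ∀ v, ∃ n, f^[n] v = root) : (ptGraph f).IsTree :=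
  ⟨ptGraph_connected f root hreach, ptGraph_acyclic f root hroot hreach⟩

lemma ptGraph_ray (f : α → α) (root : α) (hroot : f root = root)
    (hreach : ∀ v, ∃ n, f^[n] v = root) (R : ℕ → α) (hinj : Function.Injective R)
    (hadj : ∀ n, (ptGraph f).Adj (R n) (R (n + 1))) :
    ∃ N, ∀ n, N ≤ n → f (R (n + 1)) = R n := by
  by_cases hup : ∃ N, f (R (N + 1)) = R N
  · obtain ⟨N, hN⟩ := hup
    refine ⟨N, fun n hn => ?_⟩
    induction n with
    | zero => exact (by omega : N = 0) ▸ hN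
    | succ k ih =>
      rcases Nat.lt_or_ge N (k+1) with h | h
      · have hk : f (R (k + 1)) = R k := ih (by omega)
        rcases (hadj (k+1)).2 with h2 | h2
        · exfalso
          rw [hk] at h2
          exact (by omega : k ≠ k + 2) (hinj h2)
        · exact h2
      · have he : N = k + 1 := by omega
        exact he ▸ hN
  · exfalso
    push_neg at hup
    have hdown : ∀ n, f (R n) = R (n + 1) := by
      intro n
      rcases (hadj n).2 with h2 | h2
      · exact h2
      · exact absurd h2 (hup n)
    have hner : ∀ n, R n ≠ root := by
      intro n hr
      have h8 := hdown n
      rw [hr, hroot] at h8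
      exact (hadj n).1 (hr.trans h8)
    have hdec : ∀ n, ptDepth f root hreach (R n) = ptDepth f root hreach (R (n+1)) + 1 := by
      intro n
      have h9 := ptDepth_f f root hreach (hner n)
      rw [hdown n] at h9
      omega
    have hbd : ∀ n, ptDepth f root hreach (R n) + n ≤ ptDepth f root hreach (R 0) := by
      intro n
      induction n with
      | zero => simp
      | succ k ih => have := hdec k; omega
    have := hbd (ptDepth f root hreach (R 0) + 1)
    omega

end ParentTree


section DirA

variable {V : Type u} {ι : Type u} {G : SimpleGraph V} {U : Set V}

lemma isPath_concat {α : Type*} {T : SimpleGraph α} {a b c : α} {p : T.Walk a b}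
    (hp : p.IsPath) (h : T.Adj b c) (hc : c ∉ p.support) : (p.concat h).IsPath := by
  rw [SimpleGraph.Walk.isPath_def, SimpleGraph.Walk.support_concat,
    List.nodup_append]
  refine ⟨hp.support_nodup, List.nodup_singleton c, ?_⟩
  intro z hz z' hz' heq
  rw [List.mem_singleton] at hz'
  subst hz'
  exact hc (heq ▸ hz)

lemma end_not_mem_takeUntil {α : Type*} [DecidableEq α] {T : SimpleGraph α} {a b y : α}
    (p : T.Walk a b) (hp : p.IsPath) (hy : y ∈ p.support) (hne : y ≠ b) :
    b ∉ (p.takeUntil y hy).support := by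
  intro hb
  have hspec := p.take_spec hy
  have hnd : ((p.takeUntil y hy).append (p.dropUntil y hy)).support.Nodup := by
    rw [hspec]; exact hp.support_nodup
  rw [SimpleGraph.Walk.support_append, List.nodup_append] at hnd
  have hb2 : b ∈ (p.dropUntil y hy).support.tail := by
    have h3 : b ∈ (p.dropUntil y hy).support := SimpleGraph.Walk.end_mem_support _
    rw [SimpleGraph.Walk.support_eq_cons] at h3
    rcases List.mem_cons.mp h3 with h4 | h4
    · exact absurd h4.symm hne
    · exact h4
  exact hnd.2.2 b hb b hb2 rfl

/-- If a node `w` lies on every decomposition-tree walk between `a` and `b`, then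
every `G`-walk from a vertex of `part a` to a vertex of `part b` meets `part w`. -/
lemma part_of_sep (D : TreeDecomp G ι) {v : V} {a b w : ι}
    (hva : v ∈ D.part a) (hvb : v ∈ D.part b)
    (hsep : ∀ r : D.tree.Walk a b, w ∈ r.support) : v ∈ D.part w := by
  classical
  obtain ⟨r⟩ := D.isTree.isConnected.preconnected a b
  exact D.parts_connected v a b hva hvb r.toPath r.toPath.2 w (hsep r.toPath)

lemma meets_part (D : TreeDecomp G ι) {v x : V} (q : G.Walk v x) :
    ∀ (a b : ι), v ∈ D.part a → x ∈ D.part b →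
    ∀ (w : ι), (∀ r : D.tree.Walk a b, w ∈ r.support) →
    ∃ z ∈ q.support, z ∈ D.part w := by
  induction q with
  | nil =>
    intro a b hv hx w hsep
    exact ⟨_, SimpleGraph.Walk.start_mem_support _, part_of_sep D hv hx hsep⟩
  | @cons vv v' _ h p ih =>
    intro a b hv hx w hsep
    obtain ⟨c, hc1, hc2⟩ := D.covers_adj h
    by_cases hac : ∀ r : D.tree.Walk a c, w ∈ r.support
    · exact ⟨_, SimpleGraph.Walk.start_mem_support _, part_of_sep D hv hc1 hac⟩
    · push_neg at hac
      obtain ⟨r₀, hr₀⟩ := hac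
      have hcb : ∀ r : D.tree.Walk c b, w ∈ r.support := by
        intro r
        by_contra hw
        have := hsep (r₀.append r)
        rw [SimpleGraph.Walk.mem_support_append_iff] at this
        exact this.elim hr₀ hw
      obtain ⟨z, hz1, hz2⟩ := ih c b hc2 hx w hcb
      exact ⟨z, by rw [SimpleGraph.Walk.support_cons]; exact List.mem_cons_of_mem _ hz1, hz2⟩

/-- State for the splitting-node search. -/
structure AState (G : SimpleGraph V) (D : TreeDecomp G ι) (z0 : ι) (t : ℕ → ι) where
  tip : ι
  walk : D.tree.Walk z0 tip
  A : Set ℕ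
  walk_path : walk.IsPath
  A_inf : A.Infinite
  inv : ∀ n ∈ A, ∀ q : D.tree.Walk z0 (t n), tip ∈ q.support

/-- Either a splitting node exists or the state can be extended. -/
lemma astep (D : TreeDecomp G ι) (hfinU : ∀ s, (D.part s ∩ U).Finite)
    (u : ℕ → V) (hu : Function.Injective u) (huU : ∀ n, u n ∈ U)
    (t : ℕ → ι) (ht : ∀ n, u n ∈ D.part (t n)) (z0 : ι)
    (hns : ¬ ∃ (w : ι) (ns : ℕ → ℕ) (vs : ℕ → ι), Function.Injective ns ∧
      Function.Injective vs ∧ (∀ i, D.tree.Adj w (vs i)) ∧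
      (∀ i j, i ≠ j → ∀ q : D.tree.Walk (t (ns i)) (t (ns j)), w ∈ q.support))
    (s : AState G D z0 t) :
    ∃ s' : AState G D z0 t, ∃ h : D.tree.Adj s.tip s'.tip, s'.walk = s.walk.concat h := by
  classical
  have hBfin : {n ∈ s.A | t n = s.tip}.Finite := by
    have hsub : {n ∈ s.A | t n = s.tip} ⊆ u ⁻¹' (D.part s.tip ∩ U) := by
      rintro n ⟨-, hn2⟩
      exact ⟨hn2 ▸ ht n, huU n⟩
    exact (Set.Finite.preimage hu.injOn (hfinU s.tip)).subset hsub
  set A' : Set ℕ := s.A \ {n ∈ s.A | t n = s.tip} with hA'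
  have hA'inf : A'.Infinite := s.A_inf.diff hBfin
  have key : ∀ n ∈ A', ∃ (v' : ι), D.tree.Adj s.tip v' ∧
      (∀ Q : D.tree.Walk z0 (t n), v' ∈ Q.support) ∧ (v' ∉ s.walk.support) ∧
      Nonempty {q' : D.tree.Walk v' (t n) // q'.IsPath ∧ s.tip ∉ q'.support} := by
    intro n hn
    have hnA : n ∈ s.A := hn.1
    have hne : s.tip ≠ t n := by
      intro hEq
      exact hn.2 ⟨hnA, hEq.symm⟩
    obtain ⟨r⟩ := D.isTree.isConnected.preconnected s.tip (t n)
    obtain ⟨v', h', q', hq'⟩ := SimpleGraph.Walk.exists_eq_cons_of_ne hne r.toPath.val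
    have hqpath : q'.IsPath ∧ s.tip ∉ q'.support := by
      have := r.toPath.2
      rw [hq'] at this
      rw [SimpleGraph.Walk.cons_isPath_iff] at this
      exact this
    refine ⟨v', h', ?_, ?_, ⟨⟨q', hqpath⟩⟩⟩
    · intro Q
      have htip : s.tip ∈ Q.support := s.inv n hnA Q
      have hsub : (SimpleGraph.Walk.cons h' q').support ⊆ (Q.dropUntil s.tip htip).support :=
        path_support_subset_walk D.isTree.IsAcyclic _ (hq' ▸ r.toPath.2) _
      have hv' : v' ∈ (SimpleGraph.Walk.cons h' q').support := by
        rw [SimpleGraph.Walk.support_cons]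
        exact List.mem_cons_of_mem _ q'.start_mem_support
      exact SimpleGraph.Walk.support_dropUntil_subset Q htip (hsub hv')
    · intro hvw
      have hQ : s.tip ∉ ((s.walk.takeUntil v' hvw).append q').support := by
        rw [SimpleGraph.Walk.mem_support_append_iff]
        rintro (h1 | h1)
        · exact end_not_mem_takeUntil s.walk s.walk_path hvw h'.ne' h1
        · exact hqpath.2 h1
      exact hQ (s.inv n hnA _)
  have key' : ∀ n : ℕ, ∃ (v' : ι), n ∈ A' → (D.tree.Adj s.tip v' ∧
      (∀ Q : D.tree.Walk z0 (t n), v' ∈ Q.support) ∧ (v' ∉ s.walk.support) ∧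
      Nonempty {q' : D.tree.Walk v' (t n) // q'.IsPath ∧ s.tip ∉ q'.support}) := by
    intro n
    by_cases hn : n ∈ A'
    · obtain ⟨v', hv'⟩ := key n hn
      exact ⟨v', fun _ => hv'⟩
    · exact ⟨z0, fun h => absurd h hn⟩
  choose vf hvf using key'
  by_cases hcl : ∃ vstar, {n ∈ A' | vf n = vstar}.Infinite
  · obtain ⟨vstar, hinf⟩ := hcl
    obtain ⟨n₀, hn₀⟩ := hinf.nonempty
    have hadj : D.tree.Adj s.tip vstar := hn₀.2 ▸ (hvf n₀ hn₀.1).1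
    have hnotin : vstar ∉ s.walk.support := hn₀.2 ▸ (hvf n₀ hn₀.1).2.2.1
    refine ⟨⟨vstar, s.walk.concat hadj, {n ∈ A' | vf n = vstar},
      isPath_concat s.walk_path hadj hnotin, hinf, ?_⟩, hadj, rfl⟩
    intro n hn Q
    exact hn.2 ▸ (hvf n hn.1).2.1 Q
  · exfalso
    push_neg at hcl
    have hVSinf : (vf '' A').Infinite := by
      intro hfin
      apply hA'inf
      have : A' ⊆ ⋃ v ∈ vf '' A', {n ∈ A' | vf n = v} := by
        intro n hn
        simp only [Set.mem_iUnion]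
        exact ⟨vf n, ⟨n, hn, rfl⟩, hn, rfl⟩
      exact (Set.Finite.biUnion hfin (fun v _ => by
        exact hcl v)).subset this
    set e := hVSinf.natEmbedding with he
    apply hns
    have hpre : ∀ i : ℕ, ∃ n ∈ A', vf n = (e i).val := by
      intro i
      obtain ⟨n, hn, hvn⟩ := (e i).property
      exact ⟨n, hn, hvn⟩
    choose ns hns1 hns2 using hpre
    refine ⟨s.tip, ns, fun i => (e i).val, ?_, ?_, ?_, ?_⟩
    · intro i j hij
      apply e.injective
      apply Subtype.ext
      rw [← hns2 i, ← hns2 j, hij]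
    · intro i j hij
      apply e.injective
      exact Subtype.ext hij
    · intro i
      have h := (hvf (ns i) (hns1 i)).1
      rw [hns2 i] at h
      exact h
    · intro i j hij Q
      by_contra hw
      obtain ⟨qi, hqi⟩ := (hvf (ns i) (hns1 i)).2.2.2
      obtain ⟨qj, hqj⟩ := (hvf (ns j) (hns1 j)).2.2.2
      have hvi : vf (ns i) = (e i).val := hns2 i
      have hvj : vf (ns j) = (e j).val := hns2 j
      set W := qi.append (Q.append qj.reverse) with hW
      have hWs : s.tip ∉ W.support := by
        rw [hW, SimpleGraph.Walk.mem_support_append_iff,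
          SimpleGraph.Walk.mem_support_append_iff, SimpleGraph.Walk.support_reverse]
        rintro (h1 | h1 | h1)
        · exact hqi.2 h1
        · exact hw h1
        · exact hqj.2 (List.mem_reverse.mp h1)
      have hPs : s.tip ∉ W.toPath.val.support := fun h =>
        hWs (SimpleGraph.Walk.support_toPath_subset W h)
      have hadji : D.tree.Adj s.tip (vf (ns i)) := (hvf (ns i) (hns1 i)).1
      have hadjj : D.tree.Adj s.tip (vf (ns j)) := (hvf (ns j) (hns1 j)).1
      have hne : vf (ns i) ≠ vf (ns j) := by
        rw [hvi, hvj]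
        intro hEq
        exact hij (e.injective (Subtype.ext hEq))
      have hp1 : (SimpleGraph.Walk.cons hadjj SimpleGraph.Walk.nil).IsPath := by
        rw [SimpleGraph.Walk.cons_isPath_iff]
        refine ⟨SimpleGraph.Walk.IsPath.nil, ?_⟩
        simp only [SimpleGraph.Walk.support_nil, List.mem_singleton]
        exact hadjj.ne
      have hp2 : (SimpleGraph.Walk.cons hadji W.toPath.val).IsPath := by
        rw [SimpleGraph.Walk.cons_isPath_iff]
        exact ⟨W.toPath.2, hPs⟩
      have huniq := SimpleGraph.isAcyclic_iff_path_unique.mp D.isTree.IsAcyclic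
        (⟨_, hp1⟩ : D.tree.Path _ _) ⟨_, hp2⟩
      have hval := congrArg Subtype.val huniq
      simp only at hval
      have hgv := congrArg (fun q : D.tree.Walk s.tip (vf (ns j)) => q.getVert 1) hval
      simp only [SimpleGraph.Walk.getVert_cons_succ, SimpleGraph.Walk.getVert_zero] at hgv
      exact hne hgv.symm

end DirA


section DirA2

variable {V : Type u} {ι : Type u} {G : SimpleGraph V} {U : Set V}

lemma comb_tooth_injective (c : Comb G U) : Function.Injective c.tooth := by
  intro m n h
  by_contra hmn
  exact c.paths_disjoint m n hmn (c.tooth m) ((c.path m).end_mem_support)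
    (by rw [h]; exact (c.path n).end_mem_support)

lemma comb_start_injective (c : Comb G U) : Function.Injective c.start := by
  intro m n h
  by_contra hmn
  exact c.paths_disjoint m n hmn (c.spine (c.start m)) ((c.path m).start_mem_support)
    (by rw [h]; exact (c.path n).start_mem_support)

lemma comb_spine_walk (c : Comb G U) (a d : ℕ) :
    ∃ w : G.Walk (c.spine a) (c.spine (a + d)),
      ∀ z ∈ w.support, ∃ k, a ≤ k ∧ k ≤ a + d ∧ z = c.spine k := by
  induction d with
  | zero => exact ⟨SimpleGraph.Walk.nil, fun z hz => ⟨a, le_refl _, le_refl _, by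
      simpa using hz⟩⟩
  | succ e ih =>
    obtain ⟨w, hw⟩ := ih
    refine ⟨w.concat (c.spine_ray.2 (a + e)), ?_⟩
    intro z hz
    rw [SimpleGraph.Walk.support_concat, List.mem_append] at hz
    rcases hz with hz | hz
    · obtain ⟨k, h1, h2, h3⟩ := hw z hz
      exact ⟨k, h1, by omega, h3⟩
    · exact ⟨a + e + 1, by omega, by omega, by simpa [Nat.add_assoc] using hz⟩

/-- Direction A: a comb and a decomposition as in (ii) cannot coexist. -/
lemma dirA (hcomb : HasComb G U) (D : TreeDecomp G ι) (hrl : RaylessTree D.tree)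
    (hfinU : ∀ s, (D.part s ∩ U).Finite)
    (hnl : ∀ s, ¬ IsLeafNode D.tree s → (D.part s).Finite) : False := by
  classical
  obtain ⟨c⟩ := hcomb
  have hu : Function.Injective c.tooth := comb_tooth_injective c
  have ht0 : ∀ n, ∃ i, c.tooth n ∈ D.part i := fun n => D.covers (c.tooth n)
  choose t ht using ht0
  -- Find a splitting node
  have hsplit : ∃ (w : ι) (ns : ℕ → ℕ) (vs : ℕ → ι), Function.Injective ns ∧
      Function.Injective vs ∧ (∀ i, D.tree.Adj w (vs i)) ∧
      (∀ i j, i ≠ j → ∀ q : D.tree.Walk (t (ns i)) (t (ns j)), w ∈ q.support) := by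
    by_contra hns
    have s0 : AState G D (t 0) t :=
      ⟨t 0, SimpleGraph.Walk.nil, Set.univ, SimpleGraph.Walk.IsPath.nil, Set.infinite_univ,
        fun n _ q => q.start_mem_support⟩
    have hstep := astep D hfinU c.tooth hu c.tooth_mem t ht (t 0) hns
    let f : AState G D (t 0) t → AState G D (t 0) t := fun s => (hstep s).choose
    have hf : ∀ s, ∃ h : D.tree.Adj s.tip (f s).tip, (f s).walk = s.walk.concat h :=
      fun s => (hstep s).choose_spec
    let seq : ℕ → AState G D (t 0) t := fun k => f^[k] s0
    have hseq : ∀ k, seq (k+1) = f (seq k) := by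
      intro k
      simp only [seq, Function.iterate_succ_apply']
    have hsupgrow : ∀ k, ∃ h : D.tree.Adj (seq k).tip (seq (k+1)).tip,
        (seq (k+1)).walk = ((seq k).walk).concat h := by
      intro k
      have h2 := hf (seq k)
      rw [hseq k]
      exact h2
    have hadj : ∀ k, D.tree.Adj (seq k).tip (seq (k+1)).tip := by
      intro k
      obtain ⟨h, -⟩ := hsupgrow k
      exact h
    have hmem : ∀ j k, j ≤ k → (seq j).tip ∈ (seq k).walk.support := by
      intro j k
      induction k with
      | zero =>
        intro hjk
        have : j = 0 := by omega
        subst this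
        exact SimpleGraph.Walk.end_mem_support _
      | succ m ih =>
        intro hjk
        obtain ⟨h, hh⟩ := hsupgrow m
        rcases Nat.lt_or_ge j (m+1) with h1 | h1
        · rw [hh, SimpleGraph.Walk.support_concat]
          exact List.mem_append.mpr (Or.inl (ih (by omega)))
        · have : j = m + 1 := by omega
          subst this
          exact SimpleGraph.Walk.end_mem_support _
    have hnot : ∀ k, (seq (k+1)).tip ∉ (seq k).walk.support := by
      intro k hin
      obtain ⟨h, hh⟩ := hsupgrow k
      have hp := (seq (k+1)).walk_path
      rw [hh, SimpleGraph.Walk.isPath_def, SimpleGraph.Walk.support_concat,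
        List.nodup_append] at hp
      exact hp.2.2 _ hin _ (List.mem_singleton.mpr rfl) rfl
    have hinj : Function.Injective (fun k => (seq k).tip) := by
      intro i j hij
      dsimp only at hij
      by_contra hne
      rcases Nat.lt_or_ge i j with h1 | h1
      · obtain ⟨m, rfl⟩ : ∃ m, j = m + 1 := ⟨j - 1, by omega⟩
        exact hnot m (by rw [← hij]; exact hmem i m (by omega))
      · have h2 : j < i := by omega
        obtain ⟨m, rfl⟩ : ∃ m, i = m + 1 := ⟨i - 1, by omega⟩
        exact hnot m (by rw [hij]; exact hmem j m (by omega))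
    exact hrl ⟨fun k => (seq k).tip, hinj, hadj⟩
  obtain ⟨w, ns, vs, hnsi, hvsi, hadjw, hsepw⟩ := hsplit
  -- w is not a leaf
  have hwnl : ¬ IsLeafNode D.tree w := by
    intro hleaf
    have h01 : vs 0 = vs 1 := hleaf (hadjw 0) (hadjw 1)
    exact (by omega : (0:ℕ) ≠ 1) (hvsi h01)
  have hPw : (D.part w).Finite := hnl w hwnl
  -- finitely many spine vertices in part w
  have hSsp : (c.spine ⁻¹' (D.part w)).Finite :=
    Set.Finite.preimage c.spine_ray.1.injOn hPw
  obtain ⟨N₀, hN₀⟩ := hSsp.bddAbove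
  set N := N₀ + 1 with hN
  have hNs : ∀ k, c.spine k ∈ D.part w → k < N := by
    intro k hk
    have := hN₀ hk
    omega
  -- finitely many tooth-paths meeting part w
  set Fset : Set ℕ := {m | ∃ x, x ∈ (c.path m).support ∧ x ∈ D.part w} with hFdef
  have hFfin : Fset.Finite := by
    have hgex : ∀ m : ℕ, ∃ x, m ∈ Fset → (x ∈ (c.path m).support ∧ x ∈ D.part w) := by
      intro m
      by_cases hm : m ∈ Fset
      · obtain ⟨x, hx1, hx2⟩ := hm
        exact ⟨x, fun _ => ⟨hx1, hx2⟩⟩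
      · exact ⟨c.tooth m, fun h => absurd h hm⟩
    choose g hg using hgex
    apply Set.Finite.of_finite_image (f := g)
    · apply hPw.subset
      rintro y ⟨m, hm, rfl⟩
      exact (hg m hm).2
    · intro m hm n hn hmn
      by_contra hne
      exact c.paths_disjoint m n hne _ (hg m hm).1 (by rw [hmn]; exact (hg n hn).1)
  -- bad indices
  have hBad : ({i | ns i ∈ Fset} ∪ {i | c.start (ns i) < N}).Finite := by
    apply Set.Finite.union
    · exact Set.Finite.preimage hnsi.injOn hFfin
    · have : {i | c.start (ns i) < N} = (fun i => c.start (ns i)) ⁻¹' (Set.Iio N) := rfl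
      rw [this]
      exact Set.Finite.preimage ((comb_start_injective c).comp hnsi).injOn (Set.finite_Iio N)
  obtain ⟨i₀, hi₀⟩ := (hBad.infinite_compl).nonempty
  obtain ⟨j₀, hj₀, hj₀ne⟩ := (hBad.infinite_compl.diff (Set.finite_singleton i₀)).nonempty

  have hj₀i : j₀ ≠ i₀ := by
    intro h
    exact hj₀ne (by simp [h])
  -- symmetric helper
  have helper : ∀ i j, i ≠ j → c.start (ns i) ≤ c.start (ns j) →
      ns i ∉ Fset → ns j ∉ Fset → N ≤ c.start (ns i) → False := by
    intro i j hij hstart hFi hFj hNi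
    obtain ⟨sw, hsw⟩ := comb_spine_walk c (c.start (ns i)) (c.start (ns j) - c.start (ns i))
    have heq : c.start (ns i) + (c.start (ns j) - c.start (ns i)) = c.start (ns j) := by omega
    set sw' := sw.copy rfl (congrArg c.spine heq) with hsw'def
    have hsw2 : ∀ z ∈ sw'.support, ∃ k, c.start (ns i) ≤ k ∧ k ≤ c.start (ns j) ∧ z = c.spine k := by
      intro z hz
      rw [hsw'def, SimpleGraph.Walk.support_copy] at hz
      obtain ⟨k, h1, h2, h3⟩ := hsw z hz
      exact ⟨k, h1, by omega, h3⟩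
    set W := (c.path (ns i)).reverse.append (sw'.append (c.path (ns j))) with hWdef
    obtain ⟨z, hz1, hz2⟩ := meets_part D W (t (ns i)) (t (ns j)) (ht (ns i)) (ht (ns j))
      w (hsepw i j hij)
    rw [hWdef, SimpleGraph.Walk.mem_support_append_iff,
      SimpleGraph.Walk.mem_support_append_iff, SimpleGraph.Walk.support_reverse] at hz1
    rcases hz1 with hz1 | hz1 | hz1
    · exact hFi ⟨z, List.mem_reverse.mp hz1, hz2⟩
    · obtain ⟨k, hk1, hk2, rfl⟩ := hsw2 z hz1
      have := hNs k hz2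
      omega
    · exact hFj ⟨z, hz1, hz2⟩
  rcases le_total (c.start (ns i₀)) (c.start (ns j₀)) with h | h
  · refine helper i₀ j₀ (fun hEq => hj₀i hEq.symm) h ?_ ?_ ?_
    · intro hF; exact hi₀ (Or.inl hF)
    · intro hF; exact hj₀ (Or.inl hF)
    · by_contra hlt; exact hi₀ (Or.inr (show c.start (ns i₀) < N by omega))
  · refine helper j₀ i₀ hj₀i h ?_ ?_ ?_
    · intro hF; exact hj₀ (Or.inl hF)
    · intro hF; exact hi₀ (Or.inl hF)
    · by_contra hlt; exact hj₀ (Or.inr (show c.start (ns j₀) < N by omega))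

end DirA2


section PTsec

variable {V : Type u}

/-- A partial normal tree in `G` rooted at `v₀`, with every non-root vertex lying
below a vertex of `U`. -/
structure PT (G : SimpleGraph V) (U : Set V) (v₀ : V) where
  dom : Set V
  par : V → V
  root_mem : v₀ ∈ dom
  par_root : par v₀ = v₀
  par_out : ∀ v, v ∉ dom → par v = v
  par_mem : ∀ v ∈ dom, par v ∈ dom
  par_adj : ∀ v ∈ dom, v ≠ v₀ → G.Adj (par v) v
  reach : ∀ v ∈ dom, ∃ n, par^[n] v = v₀
  nrm : ∀ x ∈ dom, ∀ y ∈ dom, x ≠ y → ∀ w : G.Walk x y,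
      (∀ z ∈ w.support, z ≠ x → z ≠ y → z ∉ dom) →
      (∃ n, par^[n] y = x) ∨ (∃ n, par^[n] x = y)
  cof : ∀ t ∈ dom, t ≠ v₀ → ∃ u, u ∈ U ∩ dom ∧ ∃ n, par^[n] u = t

namespace PT

variable {G : SimpleGraph V} {U : Set V} {v₀ : V} (q : PT G U v₀)

/-- `x` lies below (or equals) `y` in the tree-order. -/
def tle (x y : V) : Prop := ∃ n, q.par^[n] y = x

lemma tle_refl (x : V) : q.tle x x := ⟨0, rfl⟩

lemma iter_mem {v : V} (hv : v ∈ q.dom) (n : ℕ) : q.par^[n] v ∈ q.dom := by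
  induction n with
  | zero => exact hv
  | succ k ih => rw [Function.iterate_succ_apply']; exact q.par_mem _ ih

lemma tle_trans {x y z : V} (h1 : q.tle x y) (h2 : q.tle y z) : q.tle x z := by
  obtain ⟨n, hn⟩ := h1
  obtain ⟨m, hm⟩ := h2
  exact ⟨n + m, by rw [Function.iterate_add_apply, hm, hn]⟩

lemma tle_mem {x y : V} (h : q.tle x y) (hy : y ∈ q.dom) : x ∈ q.dom := by
  obtain ⟨n, hn⟩ := h
  exact hn ▸ q.iter_mem hy n

noncomputable def depth (v : V) : ℕ :=
  @dite ℕ (v ∈ q.dom) (Classical.dec _)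
    (fun hv => @Nat.find (fun n => q.par^[n] v = v₀) (Classical.decPred _) (q.reach v hv))
    (fun _ => 0)

lemma depth_eq {v : V} (hv : v ∈ q.dom) :
    q.depth v = @Nat.find (fun n => q.par^[n] v = v₀) (Classical.decPred _) (q.reach v hv) := by
  rw [depth]
  exact dif_pos hv

lemma depth_spec {v : V} (hv : v ∈ q.dom) : q.par^[q.depth v] v = v₀ := by
  rw [q.depth_eq hv]
  exact @Nat.find_spec (fun n => q.par^[n] v = v₀) (Classical.decPred _) (q.reach v hv)

lemma depth_le {v : V} (hv : v ∈ q.dom) {m : ℕ} (hm : q.par^[m] v = v₀) : q.depth v ≤ m := by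
  rw [q.depth_eq hv]
  exact @Nat.find_le _ (fun n => q.par^[n] v = v₀) (Classical.decPred _) (q.reach v hv) hm

lemma depth_min {v : V} (hv : v ∈ q.dom) {m : ℕ} (hm : m < q.depth v) : q.par^[m] v ≠ v₀ := by
  rw [q.depth_eq hv] at hm
  exact @Nat.find_min (fun n => q.par^[n] v = v₀) (Classical.decPred _) (q.reach v hv) _ hm

lemma depth_zero_iff {v : V} (hv : v ∈ q.dom) : q.depth v = 0 ↔ v = v₀ := by
  constructor
  · intro h
    have := q.depth_spec hv
    rw [h] at this
    simpa using this
  · intro h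
    have : q.depth v ≤ 0 := q.depth_le hv (by simpa using h)
    omega

lemma depth_par {v : V} (hv : v ∈ q.dom) (hne : v ≠ v₀) :
    q.depth (q.par v) + 1 = q.depth v := by
  have hpv : q.par v ∈ q.dom := q.par_mem v hv
  have h0 : 0 < q.depth v := by
    rcases Nat.eq_zero_or_pos (q.depth v) with h | h
    · exact absurd ((q.depth_zero_iff hv).mp h) hne
    · exact h
  have hle : q.depth (q.par v) ≤ q.depth v - 1 := by
    apply q.depth_le hpv
    have heq : q.par^[q.depth v - 1] (q.par v) = q.par^[q.depth v] v := by
      rw [← Function.iterate_succ_apply, Nat.succ_eq_add_one, Nat.sub_add_cancel h0]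
    rw [heq]
    exact q.depth_spec hv
  have hge : q.depth v ≤ q.depth (q.par v) + 1 := by
    apply q.depth_le hv
    rw [Function.iterate_succ_apply]
    exact q.depth_spec hpv
  omega

lemma depth_iterate {v : V} (hv : v ∈ q.dom) {n : ℕ} (hn : n ≤ q.depth v) :
    q.depth (q.par^[n] v) = q.depth v - n := by
  revert hn
  induction n with
  | zero => intro _; simp
  | succ k ih =>
    intro hn
    have hk := ih (by omega)
    have hkv : q.par^[k] v ≠ v₀ := q.depth_min hv (by omega)
    have h2 := q.depth_par (q.iter_mem hv k) hkv
    rw [← Function.iterate_succ_apply' q.par k v] at h2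
    simp only [Nat.succ_eq_add_one] at h2
    omega

lemma stabilize {v : V} (hv : v ∈ q.dom) {n : ℕ} (hn : q.depth v ≤ n) :
    q.par^[n] v = v₀ := by
  obtain ⟨k, rfl⟩ : ∃ k, n = k + q.depth v := ⟨n - q.depth v, by omega⟩
  rw [Function.iterate_add_apply, q.depth_spec hv]
  exact Function.iterate_fixed q.par_root k

lemma tle_norm {x y : V} (hy : y ∈ q.dom) (h : q.tle x y) :
    q.par^[q.depth y - q.depth x] y = x ∧ q.depth x ≤ q.depth y := by
  obtain ⟨n, hn⟩ := h
  rcases le_or_gt n (q.depth y) with h1 | h1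
  · have hd : q.depth (q.par^[n] y) = q.depth y - n := q.depth_iterate hy h1
    rw [hn] at hd
    have : q.depth y - q.depth x = n := by omega
    rw [this, hn]
    exact ⟨rfl, by omega⟩
  · have hx : x = v₀ := by rw [← hn]; exact q.stabilize hy (by omega)
    have hd0 : q.depth x = 0 := by
      rw [hx]; exact (q.depth_zero_iff q.root_mem).mpr rfl
    rw [hd0, hx]
    simp only [Nat.sub_zero]
    exact ⟨q.depth_spec hy, by omega⟩

lemma tle_antisymm {x y : V} (hy : y ∈ q.dom) (h1 : q.tle x y) (h2 : q.tle y x) : x = y := by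
  have hx : x ∈ q.dom := q.tle_mem h1 hy
  have n1 := q.tle_norm hy h1
  have n2 := q.tle_norm hx h2
  have hdd : q.depth x = q.depth y := by omega
  have := n1.1
  rw [hdd] at this
  simpa using this.symm

lemma depth_lt {x y : V} (hy : y ∈ q.dom) (h : q.tle x y) (hne : x ≠ y) :
    q.depth x < q.depth y := by
  have h2 := q.tle_norm hy h
  rcases Nat.lt_or_ge (q.depth x) (q.depth y) with h3 | h3
  · exact h3
  · exfalso
    have : q.depth y - q.depth x = 0 := by omega
    rw [this] at h2
    exact hne (h2.1.symm)

lemma tle_uniq {a b c : V} (hc : c ∈ q.dom) (h1 : q.tle a c) (h2 : q.tle b c)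
    (hd : q.depth a = q.depth b) : a = b := by
  have n1 := (q.tle_norm hc h1).1
  have n2 := (q.tle_norm hc h2).1
  rw [← n1, ← n2, hd]

lemma tle_comparable {a b c : V} (hc : c ∈ q.dom) (h1 : q.tle a c) (h2 : q.tle b c) :
    q.tle a b ∨ q.tle b a := by
  have n1 := q.tle_norm hc h1
  have n2 := q.tle_norm hc h2
  rcases le_total (q.depth a) (q.depth b) with h | h
  · left
    refine ⟨q.depth b - q.depth a, ?_⟩
    have hcalc : q.par^[q.depth b - q.depth a] b
        = q.par^[q.depth b - q.depth a] (q.par^[q.depth c - q.depth b] c) := by rw [n2.1]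
    rw [hcalc, ← Function.iterate_add_apply]
    have he : q.depth b - q.depth a + (q.depth c - q.depth b) = q.depth c - q.depth a := by
      omega
    rw [he, n1.1]
  · right
    refine ⟨q.depth a - q.depth b, ?_⟩
    have hcalc : q.par^[q.depth a - q.depth b] a
        = q.par^[q.depth a - q.depth b] (q.par^[q.depth c - q.depth a] c) := by rw [n1.1]
    rw [hcalc, ← Function.iterate_add_apply]
    have he : q.depth a - q.depth b + (q.depth c - q.depth a) = q.depth c - q.depth b := by
      omega
    rw [he, n2.1]

lemma dn_finite {t : V} (ht : t ∈ q.dom) : {x | q.tle x t}.Finite := by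
  apply Set.Finite.subset (Set.Finite.image (fun i => q.par^[i] t) (Set.finite_Iic (q.depth t)))
  rintro x ⟨n, hn⟩
  rcases le_or_gt n (q.depth t) with h | h
  · exact ⟨n, h, hn⟩
  · refine ⟨q.depth t, Set.mem_Iic.mpr (le_refl _), ?_⟩
    show q.par^[q.depth t] t = x
    rw [q.depth_spec ht, ← hn]
    exact (q.stabilize ht (by omega)).symm

end PT

end PTsec


section ASC

variable {V : Type u} {G : SimpleGraph V} {U : Set V} {v₀ : V}

namespace PT

lemma walk_desc (q : PT G U v₀) {v : V} (hv : v ∈ q.dom) (n : ℕ) (hn : n ≤ q.depth v) :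
    ∃ wk : G.Walk (q.par^[n] v) v, wk.IsPath ∧
      (∀ z ∈ wk.support, ∃ i ≤ n, z = q.par^[i] v) := by
  revert hn
  induction n with
  | zero =>
    intro _
    refine ⟨SimpleGraph.Walk.nil, SimpleGraph.Walk.IsPath.nil, ?_⟩
    intro z hz
    change z ∈ [v] at hz
    simp only [SimpleGraph.Walk.support_nil, List.mem_singleton] at hz
    exact ⟨0, le_refl _, by simpa using hz⟩
  | succ k ih =>
    intro hn
    obtain ⟨wk, hp, hs⟩ := ih (by omega)
    have hkmem : q.par^[k] v ∈ q.dom := q.iter_mem hv k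
    have hkne : q.par^[k] v ≠ v₀ := q.depth_min hv (by omega)
    have hadj : G.Adj (q.par^[k+1] v) (q.par^[k] v) := by
      have := q.par_adj _ hkmem hkne
      rw [← Function.iterate_succ_apply' q.par k v] at this
      exact this
    have hnotin : q.par^[k+1] v ∉ wk.support := by
      intro hin
      obtain ⟨i, hi, hEq⟩ := hs _ hin
      have d1 : q.depth (q.par^[k+1] v) = q.depth v - (k+1) := q.depth_iterate hv hn
      have d2 : q.depth (q.par^[i] v) = q.depth v - i := q.depth_iterate hv (by omega)
      rw [hEq] at d1
      omega
    refine ⟨SimpleGraph.Walk.cons hadj wk, ?_, ?_⟩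
    · rw [SimpleGraph.Walk.cons_isPath_iff]
      exact ⟨hp, hnotin⟩
    · intro z hz
      rw [SimpleGraph.Walk.support_cons, List.mem_cons] at hz
      rcases hz with rfl | hz
      · exact ⟨k+1, le_refl _, rfl⟩
      · obtain ⟨i, hi, hEq⟩ := hs z hz
        exact ⟨i, by omega, hEq⟩

/-- An infinite strictly ascending sequence in the tree-order yields a comb attached
to `U`. -/
lemma asc (q : PT G U v₀) (x : ℕ → V) (hx : ∀ k, x k ∈ q.dom)
    (hasc : ∀ k, q.tle (x k) (x (k+1)) ∧ x k ≠ x (k+1)) : HasComb G U := by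
  classical
  have hmono : ∀ k l, k ≤ l → q.tle (x k) (x l) := by
    intro k l
    induction l with
    | zero => intro h; have : k = 0 := by omega
              subst this; exact q.tle_refl _
    | succ m ih =>
      intro h
      rcases Nat.lt_or_ge k (m+1) with h1 | h1
      · exact q.tle_trans (ih (by omega)) (hasc m).1
      · have : k = m + 1 := by omega
        subst this; exact q.tle_refl _
  have hdepth : ∀ k, k ≤ q.depth (x k) := by
    intro k
    induction k with
    | zero => omega
    | succ m ih =>
      have := q.depth_lt (hx (m+1)) (hasc m).1 (hasc m).2
      omega
  -- the spine
  set r : ℕ → V := fun m => q.par^[q.depth (x m) - m] (x m) with hrdef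
  have hr_mem : ∀ m, r m ∈ q.dom := fun m => q.iter_mem (hx m) _
  have hr_tle : ∀ m, q.tle (r m) (x m) := fun m => ⟨_, rfl⟩
  have hr_depth : ∀ m, q.depth (r m) = m := by
    intro m
    have := q.depth_iterate (hx m) (n := q.depth (x m) - m) (by omega)
    rw [hrdef]
    simp only []
    rw [this]
    have := hdepth m
    omega
  have hr_tle_x : ∀ m k, m ≤ k → q.tle (r m) (x k) :=
    fun m k h => q.tle_trans (hr_tle m) (hmono m k h)
  have hr_par : ∀ m, q.par (r (m+1)) = r m := by
    intro m
    have h1 : q.tle (q.par (r (m+1))) (x (m+1)) :=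
      q.tle_trans ⟨1, by simp⟩ (hr_tle_x (m+1) (m+1) (le_refl _))
    have h2 : q.tle (r m) (x (m+1)) := hr_tle_x m (m+1) (by omega)
    have hne : r (m+1) ≠ v₀ := by
      intro h
      have := hr_depth (m+1)
      rw [h, (q.depth_zero_iff q.root_mem).mpr rfl] at this
      omega
    have hd1 : q.depth (q.par (r (m+1))) = m := by
      have := q.depth_par (hr_mem (m+1)) hne
      rw [hr_depth (m+1)] at this
      omega
    exact q.tle_uniq (hx (m+1)) h1 h2 (by rw [hd1, hr_depth m])
  have hr_inj : Function.Injective r := by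
    intro a b hab
    have := hr_depth a
    rw [hab, hr_depth b] at this
    omega
  have hr_adj : ∀ m, G.Adj (r m) (r (m+1)) := by
    intro m
    have hne : r (m+1) ≠ v₀ := by
      intro h
      have := hr_depth (m+1)
      rw [h, (q.depth_zero_iff q.root_mem).mpr rfl] at this
      omega
    have := q.par_adj _ (hr_mem (m+1)) hne
    rw [hr_par m] at this
    exact this
  -- teeth
  have hw : ∀ m, ∃ u, (u ∈ U ∧ u ∈ q.dom) ∧ q.tle (r (m+1)) u := by
    intro m
    have hne : r (m+1) ≠ v₀ := by
      intro h
      have := hr_depth (m+1)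
      rw [h, (q.depth_zero_iff q.root_mem).mpr rfl] at this
      omega
    obtain ⟨u, hu1, n, hn⟩ := q.cof (r (m+1)) (hr_mem (m+1)) hne
    exact ⟨u, ⟨hu1.1, hu1.2⟩, n, hn⟩
  choose w hwU hwtle using hw
  have hwdom : ∀ m, w m ∈ q.dom := fun m => (hwU m).2
  -- the attachment indices
  have hjle : ∀ m j, q.tle (r j) (w m) → j ≤ q.depth (w m) := by
    intro m j hj
    have := (q.tle_norm (hwdom m) hj).2
    rw [hr_depth j] at this
    exact this
  have hjex : ∀ m, ∃ jm, q.tle (r jm) (w m) ∧ m + 1 ≤ jm ∧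
      (∀ j, q.tle (r j) (w m) → j ≤ jm) := by
    intro m
    haveI : DecidablePred (fun j => q.tle (r j) (w m)) := Classical.decPred _
    refine ⟨Nat.findGreatest (fun j => q.tle (r j) (w m)) (q.depth (w m)), ?_, ?_, ?_⟩
    · exact Nat.findGreatest_spec (P := fun j => q.tle (r j) (w m))
        (hjle m (m+1) (hwtle m)) (hwtle m)
    · exact Nat.le_findGreatest (P := fun j => q.tle (r j) (w m))
        (hjle m (m+1) (hwtle m)) (hwtle m)
    · intro j hj
      by_contra hlt
      exact Nat.findGreatest_is_greatest (P := fun j => q.tle (r j) (w m))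
        (by omega) (hjle m j hj) hj
  choose jst hjst2 hjst1 hjst3 using hjex
  -- tooth paths
  have hpaths : ∀ m, ∃ wk : G.Walk (r (jst m)) (w m), wk.IsPath ∧
      (∀ z ∈ wk.support, ∃ i ≤ q.depth (w m) - jst m, z = q.par^[i] (w m)) := by
    intro m
    have hnorm := q.tle_norm (hwdom m) (hjst2 m)
    rw [hr_depth (jst m)] at hnorm
    obtain ⟨hnorm1, hnorm2⟩ := hnorm
    obtain ⟨wk, hp, hs⟩ := q.walk_desc (hwdom m) (q.depth (w m) - jst m) (by omega)
    refine ⟨wk.copy hnorm1 rfl, ?_, ?_⟩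
    · rw [SimpleGraph.Walk.isPath_copy]
      exact hp
    · intro z hz
      rw [SimpleGraph.Walk.support_copy] at hz
      exact hs z hz
  choose pth hpth1 hpth2 using hpaths
  have hjD : ∀ m, jst m ≤ q.depth (w m) := fun m => hjle m (jst m) (hjst2 m)
  -- depth bounds on tooth path supports
  have hsupp_depth : ∀ m z, z ∈ (pth m).support →
      jst m ≤ q.depth z ∧ q.depth z ≤ q.depth (w m) ∧ q.tle z (w m) := by
    intro m z hz
    have hjDm := hjD m
    obtain ⟨i, hi, rfl⟩ := hpth2 m z hz
    have hd := q.depth_iterate (hwdom m) (n := i) (by omega)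
    refine ⟨by omega, by omega, ⟨i, rfl⟩⟩
  have hmeets : ∀ m z, z ∈ (pth m).support → z ∈ Set.range r → z = r (jst m) := by
    intro m z hz ⟨j, hj⟩
    obtain ⟨h1, h2, h3⟩ := hsupp_depth m z hz
    subst hj
    have hjd := hr_depth j
    have hle := hjst3 m j h3
    have : j = jst m := by omega
    rw [this]
  -- choose a sparse subsequence
  set s : ℕ → ℕ := fun i => Nat.rec 0 (fun _ prev => q.depth (w prev) + 1) i with hsdef
  have hs0 : s 0 = 0 := rfl
  have hssucc : ∀ i, s (i+1) = q.depth (w (s i)) + 1 := fun i => rfl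
  have hsmono : StrictMono s := by
    apply strictMono_nat_of_lt_succ
    intro i
    have h1 := hjst1 (s i)
    have h2 := hjle (s i) (jst (s i)) (hjst2 (s i))
    have := hssucc i
    omega
  -- the comb
  refine ⟨⟨r, ⟨hr_inj, hr_adj⟩, fun i => jst (s i), fun i => w (s i),
    fun i => (hwU (s i)).1, fun i => pth (s i), fun i => hpth1 (s i),
    fun i z hz hrange => hmeets (s i) z hz hrange, ?_⟩⟩
  intro a b hab z hza hzb
  obtain ⟨ha1, ha2, -⟩ := hsupp_depth (s a) z hza
  obtain ⟨hb1, hb2, -⟩ := hsupp_depth (s b) z hzb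
  have hkey : ∀ i j : ℕ, i < j → q.depth (w (s i)) < jst (s j) := by
    intro i j hij
    have h1 : s (i+1) ≤ s j := hsmono.monotone (by omega : i + 1 ≤ j)
    have h2 := hssucc i
    have h3 := hjst1 (s j)
    omega
  rcases Nat.lt_or_ge a b with h | h
  · have := hkey a b h
    omega
  · have := hkey b a (by omega)
    omega

end PT

end ASC


section ZornPT

variable {V : Type u} {G : SimpleGraph V} {U : Set V} {v₀ : V}

namespace PT

lemma exists_max_of_chain (q : PT G U v₀) (hnc : ¬ HasComb G U) {S : Set V}
    (hne : S.Nonempty) (hdom : S ⊆ q.dom)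
    (hcomp : ∀ a ∈ S, ∀ b ∈ S, q.tle a b ∨ q.tle b a) :
    ∃ m ∈ S, ∀ x ∈ S, q.tle x m := by
  by_contra hmax
  push_neg at hmax
  have hstep : ∀ a : {a // a ∈ S}, ∃ b : {a // a ∈ S}, q.tle a.1 b.1 ∧ a.1 ≠ b.1 := by
    rintro ⟨a, ha⟩
    obtain ⟨b, hb, hnb⟩ := hmax a ha
    rcases hcomp a ha b hb with h | h
    · refine ⟨⟨b, hb⟩, h, ?_⟩
      intro hEq
      apply hnb
      rw [show a = b from hEq]
      exact q.tle_refl b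
    · exact absurd h hnb
  choose g hg1 hg2 using hstep
  obtain ⟨a0, ha0⟩ := hne
  set sq : ℕ → {a // a ∈ S} := fun k => g^[k] ⟨a0, ha0⟩ with hsq
  have hsq1 : ∀ k, sq (k+1) = g (sq k) := fun k => Function.iterate_succ_apply' g k _
  apply hnc
  apply q.asc (fun k => (sq k).1) (fun k => hdom (sq k).2)
  intro k
  rw [hsq1 k]
  exact ⟨hg1 (sq k), hg2 (sq k)⟩

/-- Extension order on partial normal trees. -/
def Le (q q' : PT G U v₀) : Prop := q.dom ⊆ q'.dom ∧ ∀ v ∈ q.dom, q'.par v = q.par v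

lemma Le_refl (q : PT G U v₀) : Le q q := ⟨subset_rfl, fun _ _ => rfl⟩

lemma Le_trans {q1 q2 q3 : PT G U v₀} (h1 : Le q1 q2) (h2 : Le q2 q3) : Le q1 q3 := by
  refine ⟨h1.1.trans h2.1, fun v hv => ?_⟩
  rw [h2.2 v (h1.1 hv), h1.2 v hv]

lemma Le_iter {q q' : PT G U v₀} (h : Le q q') {v : V} (hv : v ∈ q.dom) (n : ℕ) :
    q'.par^[n] v = q.par^[n] v := by
  induction n with
  | zero => rfl
  | succ k ih =>
    rw [Function.iterate_succ_apply', Function.iterate_succ_apply', ih,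
      h.2 _ (q.iter_mem hv k)]

lemma Le_tle {q q' : PT G U v₀} (h : Le q q') {x y : V} (hy : y ∈ q.dom) (hxy : q.tle x y) :
    q'.tle x y := by
  obtain ⟨n, hn⟩ := hxy
  exact ⟨n, by rw [Le_iter h hy n]; exact hn⟩

/-- The trivial partial normal tree. -/
def base (G : SimpleGraph V) (U : Set V) (v₀ : V) : PT G U v₀ where
  dom := {v₀}
  par := id
  root_mem := rfl
  par_root := rfl
  par_out := fun _ _ => rfl
  par_mem := fun v hv => hv
  par_adj := fun v hv hne => absurd hv hne
  reach := fun v hv => ⟨0, hv⟩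
  nrm := fun x hx y hy hne _ _ => absurd (hx.trans hy.symm) hne
  cof := fun t ht hne => absurd ht hne

lemma chain_bound (c : Set (PT G U v₀)) (hc : IsChain Le c) (hcn : c.Nonempty) :
    ∃ ub, ∀ a ∈ c, Le a ub := by
  classical
  set domU : Set V := {v | ∃ q ∈ c, v ∈ q.dom} with hdomU
  have hch : ∀ v : V, ∃ q : PT G U v₀, v ∈ domU → (q ∈ c ∧ v ∈ q.dom) := by
    intro v
    by_cases hv : v ∈ domU
    · obtain ⟨q, hq, hvq⟩ := hv
      exact ⟨q, fun _ => ⟨hq, hvq⟩⟩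
    · exact ⟨base G U v₀, fun h => absurd h hv⟩
  choose Qf hQf using hch
  set parU : V → V := fun v => if v ∈ domU then (Qf v).par v else v with hparU
  have hagree : ∀ q ∈ c, ∀ v ∈ q.dom, parU v = q.par v := by
    intro q hq v hv
    have hvU : v ∈ domU := ⟨q, hq, hv⟩
    obtain ⟨hQc, hvQ⟩ := hQf v hvU
    have : parU v = (Qf v).par v := by rw [hparU]; simp only [if_pos hvU]
    rw [this]
    by_cases hEq : q = Qf v
    · rw [hEq]
    · rcases hc hq hQc hEq with h | h
      · exact h.2 v hv
      · exact (h.2 v hvQ).symm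
  have hsub : ∀ q ∈ c, q.dom ⊆ domU := fun q hq v hv => ⟨q, hq, hv⟩
  have hagree_iter : ∀ q ∈ c, ∀ v ∈ q.dom, ∀ n, parU^[n] v = q.par^[n] v := by
    intro q hq v hv n
    induction n with
    | zero => rfl
    | succ k ih =>
      rw [Function.iterate_succ_apply', Function.iterate_succ_apply', ih,
        hagree q hq _ (q.iter_mem hv k)]
  obtain ⟨q1, hq1⟩ := hcn
  refine ⟨⟨domU, parU, hsub q1 hq1 q1.root_mem, ?_, ?_, ?_, ?_, ?_, ?_, ?_⟩, ?_⟩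
  · rw [hagree q1 hq1 v₀ q1.root_mem]
    exact q1.par_root
  · intro v hv
    rw [hparU]
    simp only [if_neg hv]
  · rintro v ⟨q, hq, hv⟩
    rw [hagree q hq v hv]
    exact hsub q hq (q.par_mem v hv)
  · rintro v ⟨q, hq, hv⟩ hne
    rw [hagree q hq v hv]
    exact q.par_adj v hv hne
  · rintro v ⟨q, hq, hv⟩
    obtain ⟨n, hn⟩ := q.reach v hv
    exact ⟨n, by rw [hagree_iter q hq v hv n]; exact hn⟩
  · rintro x ⟨qx, hqx, hx⟩ y ⟨qy, hqy, hy⟩ hne wk hwk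
    have hcommon : ∃ q ∈ c, x ∈ q.dom ∧ y ∈ q.dom := by
      by_cases hEq : qx = qy
      · exact ⟨qy, hqy, hEq ▸ hx, hy⟩
      · rcases hc hqx hqy hEq with h | h
        · exact ⟨qy, hqy, h.1 hx, hy⟩
        · exact ⟨qx, hqx, hx, h.1 hy⟩
    obtain ⟨q, hq, hxq, hyq⟩ := hcommon
    have hint : ∀ z ∈ wk.support, z ≠ x → z ≠ y → z ∉ q.dom :=
      fun z hz h1 h2 hzq => hwk z hz h1 h2 (hsub q hq hzq)
    rcases q.nrm x hxq y hyq hne wk hint with ⟨n, hn⟩ | ⟨n, hn⟩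
    · exact Or.inl ⟨n, by rw [hagree_iter q hq y hyq n]; exact hn⟩
    · exact Or.inr ⟨n, by rw [hagree_iter q hq x hxq n]; exact hn⟩
  · rintro t ⟨q, hq, ht⟩ hne
    obtain ⟨u, hu, n, hn⟩ := q.cof t ht hne
    exact ⟨u, ⟨hu.1, hsub q hq hu.2⟩, n, by rw [hagree_iter q hq u hu.2 n]; exact hn⟩
  · intro a ha
    exact ⟨hsub a ha, fun v hv => hagree a ha v hv⟩

lemma exists_maximal : ∃ M : PT G U v₀, ∀ q, Le M q → Le q M := by
  apply exists_maximal_of_chains_bounded (r := Le)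
  · intro c hc
    rcases Set.eq_empty_or_nonempty c with rfl | hcn
    · exact ⟨base G U v₀, fun a ha => absurd ha (Set.notMem_empty a)⟩
    · exact chain_bound c hc hcn
  · intro a b c
    exact Le_trans

end PT

end ZornPT


section EXTsec

variable {V : Type u} {G : SimpleGraph V} {U : Set V} {v₀ : V}

namespace PT

lemma walk_in_comp (q : PT G U v₀) {C : G.ComponentCompl q.dom} {y b : V} (wk : G.Walk y b) :
    y ∈ C → (∀ z ∈ wk.support, z ∉ q.dom) → ∀ z ∈ wk.support, z ∈ C := by
  induction wk with
  | nil =>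
    intro hy _ z hz
    simp only [SimpleGraph.Walk.support_nil, List.mem_singleton] at hz
    subst hz
    exact hy
  | @cons a a2 c h wk' ih =>
    intro hy hdom z hz
    have hmem2 : a2 ∈ (SimpleGraph.Walk.cons h wk').support := by
      rw [SimpleGraph.Walk.support_cons]
      exact List.mem_cons_of_mem _ wk'.start_mem_support
    have hsub : ∀ z' ∈ wk'.support, z' ∈ (SimpleGraph.Walk.cons h wk').support := by
      intro z' hz'
      rw [SimpleGraph.Walk.support_cons]
      exact List.mem_cons_of_mem _ hz'
    have ha2 : a2 ∈ C := SimpleGraph.ComponentCompl.mem_of_adj a a2 hy (hdom a2 hmem2) h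
    rw [SimpleGraph.Walk.support_cons, List.mem_cons] at hz
    rcases hz with rfl | hz
    · exact hy
    · exact ih ha2 (fun z' hz' => hdom z' (hsub z' hz')) z hz

lemma comp_boundary (q : PT G U v₀) {C : G.ComponentCompl q.dom} {y x : V} (wk : G.Walk y x) :
    y ∈ C → x ∈ q.dom → (∀ z ∈ wk.support, z ≠ x → z ∉ q.dom) →
    ∃ z', z' ∈ C ∧ G.Adj z' x := by
  induction wk with
  | nil =>
    intro hy hx _
    exact absurd hx (SimpleGraph.ComponentCompl.notMem_of_mem hy)

  | @cons a a2 c h wk' ih =>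
    intro hy hx hdom
    have hmem2 : a2 ∈ (SimpleGraph.Walk.cons h wk').support := by
      rw [SimpleGraph.Walk.support_cons]
      exact List.mem_cons_of_mem _ wk'.start_mem_support
    have hsub : ∀ z' ∈ wk'.support, z' ∈ (SimpleGraph.Walk.cons h wk').support := by
      intro z' hz'
      rw [SimpleGraph.Walk.support_cons]
      exact List.mem_cons_of_mem _ hz'
    by_cases ha2 : a2 = c
    · exact ⟨a, hy, ha2 ▸ h⟩
    · have ha2dom : a2 ∉ q.dom := hdom a2 hmem2 ha2
      have ha2C : a2 ∈ C := SimpleGraph.ComponentCompl.mem_of_adj a a2 hy ha2dom h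
      exact ih ha2C hx (fun z hz hne => hdom z (hsub z hz) hne)

/-- The neighbourhood of a component in the tree. -/
def nb (q : PT G U v₀) (C : G.ComponentCompl q.dom) : Set V :=
  {x | x ∈ q.dom ∧ ∃ z, z ∈ C ∧ G.Adj x z}

lemma nb_nonempty (hGc : G.Connected) (q : PT G U v₀) (C : G.ComponentCompl q.dom) :
    (q.nb C).Nonempty := by
  obtain ⟨⟨z, x⟩, hz, hx, hadj⟩ := SimpleGraph.ComponentCompl.exists_adj_boundary_pair
    hGc.preconnected ⟨v₀, q.root_mem⟩ C
  exact ⟨x, hx, z, hz, hadj.symm⟩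

lemma comp_reachable (q : PT G U v₀) {C : G.ComponentCompl q.dom} {z z' : V}
    (hz : z ∈ C) (hz' : z' ∈ C) :
    ∃ wk : G.Walk z z', ∀ t ∈ wk.support, t ∉ q.dom := by
  obtain ⟨hzn, hCz⟩ := hz
  obtain ⟨hzn', hCz'⟩ := hz'
  have hreach : (G.induce (q.dom)ᶜ).Reachable ⟨z, hzn⟩ ⟨z', hzn'⟩ :=
    SimpleGraph.ConnectedComponent.exact (hCz.trans hCz'.symm)
  obtain ⟨wz⟩ := hreach
  refine ⟨wz.map (SimpleGraph.Embedding.induce ((q.dom)ᶜ : Set V)).toHom, ?_⟩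
  intro t ht
  replace ht : t ∈ (wz.map (SimpleGraph.Embedding.induce ((q.dom)ᶜ : Set V)).toHom).support := ht
  rw [SimpleGraph.Walk.support_map, List.mem_map] at ht
  obtain ⟨a, _, rfl⟩ := ht
  exact a.2

lemma nb_comparable (q : PT G U v₀) (C : G.ComponentCompl q.dom) :
    ∀ x ∈ q.nb C, ∀ y ∈ q.nb C, q.tle x y ∨ q.tle y x := by
  rintro x ⟨hx, z, hzC, hxz⟩ y ⟨hy, z', hz'C, hyz'⟩
  by_cases hne : x = y
  · subst hne
    exact Or.inl (q.tle_refl x)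
  · obtain ⟨wmap, hwmap⟩ := q.comp_reachable hzC hz'C
    set W := SimpleGraph.Walk.cons hxz (wmap.append (SimpleGraph.Walk.cons hyz'.symm
      SimpleGraph.Walk.nil)) with hW
    have hcond : ∀ t ∈ W.support, t ≠ x → t ≠ y → t ∉ q.dom := by
      intro t ht htx hty
      rw [hW, SimpleGraph.Walk.support_cons, List.mem_cons] at ht
      rcases ht with rfl | ht
      · exact absurd rfl htx
      · rw [SimpleGraph.Walk.mem_support_append_iff] at ht
        rcases ht with ht | ht
        · exact hwmap t ht
        · rw [SimpleGraph.Walk.support_cons, List.mem_cons] at ht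
          rcases ht with rfl | ht
          · exact SimpleGraph.ComponentCompl.notMem_of_mem hz'C
          · simp only [SimpleGraph.Walk.support_nil, List.mem_singleton] at ht
            exact absurd ht hty
    exact q.nrm x hx y hy hne W hcond

end PT

end EXTsec


section EXT2

variable {V : Type u} {G : SimpleGraph V} {U : Set V} {v₀ : V}

namespace PT

lemma extend (hGc : G.Connected) (q : PT G U v₀) (hnc : ¬ HasComb G U)
    {u : V} (huU : u ∈ U) (hu : u ∉ q.dom) :
    ∃ q' : PT G U v₀, Le q q' ∧ u ∈ q'.dom := by
  classical
  set C : G.ComponentCompl q.dom := G.componentComplMk hu with hC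
  have huC : u ∈ C := G.componentComplMk_mem hu
  obtain ⟨tstar, htNB, htmax⟩ := q.exists_max_of_chain hnc (q.nb_nonempty hGc C)
    (fun x hx => hx.1) (q.nb_comparable C)
  obtain ⟨htD, zstar, hzC, hadjz⟩ := htNB
  obtain ⟨W0, hW0⟩ := q.comp_reachable hzC huC
  set P := W0.toPath with hPdef
  set L := P.val.support with hLdef
  have hLpath : P.val.IsPath := P.2
  have hLnd : L.Nodup := hLpath.support_nodup
  have hLdom : ∀ z ∈ L, z ∉ q.dom := fun z hz =>
    hW0 z (SimpleGraph.Walk.support_toPath_subset W0 hz)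
  have hLC : ∀ z ∈ L, z ∈ C := fun z hz =>
    q.walk_in_comp W0 hzC hW0 z (SimpleGraph.Walk.support_toPath_subset W0 hz)
  have hlen : 0 < L.length := List.length_pos_iff.mpr (SimpleGraph.Walk.support_ne_nil _)
  set eli : ℕ → V := fun i => L.getD i v₀ with heli
  have hel_mem : ∀ i, i < L.length → eli i ∈ L := by
    intro i hi
    simp only [heli]
    rw [List.getD_eq_getElem L v₀ hi]
    exact List.getElem_mem _
  have hel_idx : ∀ i, i < L.length → L.idxOf (eli i) = i := by
    intro i hi
    simp only [heli]
    rw [List.getD_eq_getElem L v₀ hi]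
    exact hLnd.idxOf_getElem i hi
  have hidx_lt : ∀ v ∈ L, L.idxOf v < L.length := fun v hv => List.idxOf_lt_length_iff.mpr hv
  have hel_of : ∀ v ∈ L, eli (L.idxOf v) = v := by
    intro v hv
    simp only [heli]
    rw [List.getD_eq_getElem L v₀ (hidx_lt v hv)]
    exact List.getElem_idxOf (hidx_lt v hv)
  have hel0 : eli 0 = zstar := by
    have hcons : L = zstar :: P.val.support.tail := by
      rw [hLdef]
      exact P.val.support_eq_cons
    simp only [heli]
    rw [hcons]
    rfl
  have hzL : zstar ∈ L := by rw [← hel0]; exact hel_mem 0 hlen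
  have hlast : eli (L.length - 1) = u := by
    simp only [heli]
    rw [List.getD_eq_getElem L v₀ (by omega), ← List.getLast_eq_getElem]
    exact P.val.getLast_support
  have huL : u ∈ L := by rw [← hlast]; exact hel_mem (L.length - 1) (by omega)
  have hchain : ∀ i, i + 1 < L.length → G.Adj (eli i) (eli (i+1)) := by
    intro i hi
    have hch : List.IsChain G.Adj L := P.val.isChain_adj_support
    rw [List.isChain_iff_getElem] at hch
    have h2 := hch i (by omega)
    simp only [heli]
    rw [List.getD_eq_getElem L v₀ (by omega), List.getD_eq_getElem L v₀ hi]
    simpa using h2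
  set par' : V → V := fun v =>
    if v ∈ L then (if v = zstar then tstar else eli (L.idxOf v - 1)) else q.par v
    with hpar'
  have hpar_out : ∀ v, v ∉ L → par' v = q.par v := by
    intro v hv
    simp only [hpar', if_neg hv]
  have hpar_z : par' zstar = tstar := by
    simp only [hpar', if_pos hzL, if_true, eq_self_iff_true]
  have hidx_z : L.idxOf zstar = 0 := by rw [← hel0]; exact hel_idx 0 hlen
  have hidx_nz : ∀ v ∈ L, v ≠ zstar → L.idxOf v ≠ 0 := by
    intro v hv hne h0
    apply hne
    rw [← hel_of v hv, h0, hel0]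
  have hel_ne_z : ∀ i, i < L.length → i ≠ 0 → eli i ≠ zstar := by
    intro i hi hne hEq
    apply hne
    rw [← hel_idx i hi, hEq, hidx_z]
  have hpar_i : ∀ i, i < L.length → i ≠ 0 → par' (eli i) = eli (i - 1) := by
    intro i hi hne
    simp only [hpar', if_pos (hel_mem i hi), if_neg (hel_ne_z i hi hne), hel_idx i hi]
  have hagree : ∀ v ∈ q.dom, par' v = q.par v := fun v hv =>
    hpar_out v (fun hL => hLdom v hL hv)
  have hagree_iter : ∀ v ∈ q.dom, ∀ n, par'^[n] v = q.par^[n] v := by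
    intro v hv n
    induction n with
    | zero => rfl
    | succ k ih =>
      rw [Function.iterate_succ_apply', Function.iterate_succ_apply', ih,
        hagree _ (q.iter_mem hv k)]
  have hdown : ∀ d i, i < L.length → d ≤ i → par'^[d] (eli i) = eli (i - d) := by
    intro d
    induction d with
    | zero => intro i _ _; simp
    | succ k ih =>
      intro i hi hd
      rw [Function.iterate_succ_apply, hpar_i i hi (by omega)]
      rw [ih (i-1) (by omega) (by omega)]
      congr 1
      omega
  have hz_to_t : ∀ i, i < L.length → par'^[i+1] (eli i) = tstar := by
    intro i hi
    rw [Function.iterate_succ_apply', hdown i i hi (le_refl _)]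
    simp only [Nat.sub_self]
    rw [hel0, hpar_z]
  have htleL : ∀ i j, i ≤ j → j < L.length → ∃ n, par'^[n] (eli j) = eli i := by
    intro i j hij hj
    refine ⟨j - i, ?_⟩
    rw [hdown (j-i) j hj (by omega)]
    congr 1
    omega
  have htle_dom : ∀ x ∈ q.dom, q.tle x tstar → ∀ j, j < L.length →
      ∃ n, par'^[n] (eli j) = x := by
    intro x hx hxt j hj
    obtain ⟨n, hn⟩ := hxt
    refine ⟨n + (j+1), ?_⟩
    rw [Function.iterate_add_apply, hz_to_t j hj, hagree_iter tstar htD n]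
    exact hn
  have hbound : ∀ {x y : V} (wk : G.Walk x y), x ∈ q.dom → y ∈ L →
      (∀ z ∈ wk.support, z ≠ x → z ≠ y → z ∉ q.dom ∧ z ∉ L) → q.tle x tstar := by
    intro x y wk hx hyL hcond
    have hyC : y ∈ C := hLC y hyL
    obtain ⟨z', hz'C, hz'adj⟩ := q.comp_boundary wk.reverse hyC hx (by
      intro z hz hzx
      rw [SimpleGraph.Walk.support_reverse, List.mem_reverse] at hz
      by_cases hzy : z = y
      · subst hzy
        exact hLdom z hyL
      · exact (hcond z hz hzx hzy).1)
    exact htmax x ⟨hx, z', hz'C, hz'adj.symm⟩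
  refine ⟨⟨q.dom ∪ {v | v ∈ L}, par', Or.inl q.root_mem, ?_, ?_, ?_, ?_, ?_, ?_, ?_⟩,
    ⟨fun v hv => Or.inl hv, fun v hv => hagree v hv⟩, Or.inr huL⟩
  · -- par_root
    rw [hagree v₀ q.root_mem]
    exact q.par_root
  · -- par_out
    rintro v hv
    rw [Set.mem_union] at hv
    push_neg at hv
    rw [hpar_out v hv.2]
    exact q.par_out v hv.1
  · -- par_mem
    rintro v (hv | hv)
    · rw [hagree v hv]
      exact Or.inl (q.par_mem v hv)
    · by_cases hvz : v = zstar
      · subst hvz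
        rw [hpar_z]
        exact Or.inl htD
      · have hi := hidx_lt v hv
        have h0 := hidx_nz v hv hvz
        have := hpar_i (L.idxOf v) hi h0
        rw [hel_of v hv] at this
        rw [this]
        exact Or.inr (hel_mem _ (by omega))
  · -- par_adj
    rintro v (hv | hv) hne
    · rw [hagree v hv]
      exact q.par_adj v hv hne
    · by_cases hvz : v = zstar
      · subst hvz
        rw [hpar_z]
        exact hadjz
      · have hi := hidx_lt v hv
        have h0 := hidx_nz v hv hvz
        have h2 := hpar_i (L.idxOf v) hi h0
        rw [hel_of v hv] at h2
        rw [h2]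
        have h3 := hchain (L.idxOf v - 1) (by omega)
        have h4 : L.idxOf v - 1 + 1 = L.idxOf v := by omega
        rw [h4, hel_of v hv] at h3
        exact h3
  · -- reach
    rintro v (hv | hv)
    · obtain ⟨n, hn⟩ := q.reach v hv
      exact ⟨n, by rw [hagree_iter v hv n]; exact hn⟩
    · obtain ⟨n, hn⟩ := q.reach tstar htD
      refine ⟨n + (L.idxOf v + 1), ?_⟩
      have h2 := hz_to_t (L.idxOf v) (hidx_lt v hv)
      rw [hel_of v hv] at h2
      rw [Function.iterate_add_apply, h2, hagree_iter tstar htD n]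
      exact hn
  · -- nrm
    rintro x hx y hy hne wk hcond
    have hcond' : ∀ z ∈ wk.support, z ≠ x → z ≠ y → z ∉ q.dom ∧ z ∉ L := by
      intro z hz h1 h2
      have := hcond z hz h1 h2
      rw [Set.mem_union] at this
      push_neg at this
      exact this
    rcases hx with hx | hx <;> rcases hy with hy | hy
    · -- both old
      have hint : ∀ z ∈ wk.support, z ≠ x → z ≠ y → z ∉ q.dom :=
        fun z hz h1 h2 => (hcond' z hz h1 h2).1
      rcases q.nrm x hx y hy hne wk hint with ⟨n, hn⟩ | ⟨n, hn⟩
      · exact Or.inl ⟨n, by rw [hagree_iter y hy n]; exact hn⟩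
      · exact Or.inr ⟨n, by rw [hagree_iter x hx n]; exact hn⟩
    · -- x old, y new
      have hxt : q.tle x tstar := hbound wk hx hy hcond'
      left
      have := htle_dom x hx hxt (L.idxOf y) (hidx_lt y hy)
      rw [hel_of y hy] at this
      exact this
    · -- x new, y old
      have hyt : q.tle y tstar := hbound wk.reverse hy hx (by
        intro z hz h1 h2
        rw [SimpleGraph.Walk.support_reverse, List.mem_reverse] at hz
        exact hcond' z hz h2 h1)
      right
      have := htle_dom y hy hyt (L.idxOf x) (hidx_lt x hx)
      rw [hel_of x hx] at this
      exact this
    · -- both new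
      rcases le_total (L.idxOf x) (L.idxOf y) with h | h
      · left
        have := htleL (L.idxOf x) (L.idxOf y) h (hidx_lt y hy)
        rw [hel_of x hx, hel_of y hy] at this
        exact this
      · right
        have := htleL (L.idxOf y) (L.idxOf x) h (hidx_lt x hx)
        rw [hel_of x hx, hel_of y hy] at this
        exact this
  · -- cof
    rintro t (ht | ht) hne
    · obtain ⟨u', hu', n, hn⟩ := q.cof t ht hne
      exact ⟨u', ⟨hu'.1, Or.inl hu'.2⟩, n, by rw [hagree_iter u' hu'.2 n]; exact hn⟩
    · refine ⟨u, ⟨huU, Or.inr huL⟩, ?_⟩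
      have h2 := htleL (L.idxOf t) (L.length - 1) (by have := hidx_lt t ht; omega)
        (by omega)
      rw [hel_of t ht, hlast] at h2
      exact h2

end PT

end EXT2


section DirB

variable {V : Type u}

lemma PT.exists_full (G : SimpleGraph V) (U : Set V) (v₀ : V) (hGc : G.Connected)
    (hnc : ¬ HasComb G U) : ∃ M : PT G U v₀, U ⊆ M.dom := by
  obtain ⟨M, hM⟩ := PT.exists_maximal (G := G) (U := U) (v₀ := v₀)
  refine ⟨M, fun u huU => ?_⟩
  by_contra hu
  obtain ⟨q', hle, hq'⟩ := M.extend hGc hnc huU hu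
  exact hu ((hM q' hle).1 hq')

lemma dirB (G : SimpleGraph V) (hGc : G.Connected) (U : Set V) (hnc : ¬ HasComb G U) :
    ∃ (ι : Type u) (D : TreeDecomp G ι), RaylessTree D.tree ∧
      (∀ t, (D.part t ∩ U).Finite) ∧
      (∀ t, ¬ IsLeafNode D.tree t → (D.part t).Finite) ∧ D.ConnSeps := by
  classical
  have hne : Nonempty V := hGc.nonempty
  obtain ⟨v₀⟩ := hne
  obtain ⟨M, hMU⟩ := PT.exists_full G U v₀ hGc hnc
  have hnasc : ∀ (x : ℕ → V), (∀ k, x k ∈ M.dom) →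
      ¬ (∀ k, M.tle (x k) (x (k+1)) ∧ x k ≠ x (k+1)) :=
    fun x h1 h2 => hnc (M.asc x h1 h2)
  -- tops of component neighbourhoods
  have htops : ∀ C : G.ComponentCompl M.dom, ∃ t, (t ∈ M.nb C) ∧ ∀ x ∈ M.nb C, M.tle x t :=
    fun C => M.exists_max_of_chain hnc (M.nb_nonempty hGc C) (fun x hx => hx.1)
      (M.nb_comparable C)
  choose topN htopNB htopMax using htops
  have htopD : ∀ C, topN C ∈ M.dom := fun C => (htopNB C).1
  -- the decomposition tree
  set F : ↥M.dom ⊕ G.ComponentCompl M.dom → ↥M.dom ⊕ G.ComponentCompl M.dom :=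
    Sum.elim (fun t => Sum.inl ⟨M.par t.1, M.par_mem _ t.2⟩)
      (fun C => Sum.inl ⟨topN C, htopD C⟩) with hF
  set root : ↥M.dom ⊕ G.ComponentCompl M.dom := Sum.inl ⟨v₀, M.root_mem⟩ with hroot
  have hFroot : F root = root := by
    simp only [hF, hroot, Sum.elim_inl]
    congr 1
    exact Subtype.ext M.par_root
  have hFinl : ∀ (t : ↥M.dom) (n : ℕ),
      F^[n] (Sum.inl t) = Sum.inl ⟨M.par^[n] t.1, M.iter_mem t.2 n⟩ := by
    intro t n
    induction n with
    | zero => rfl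
    | succ k ih =>
      rw [Function.iterate_succ_apply', ih]
      simp only [hF, Sum.elim_inl]
      congr 1
      exact Subtype.ext (Function.iterate_succ_apply' M.par k t.1).symm
  have hreach : ∀ z, ∃ n, F^[n] z = root := by
    rintro (t | C)
    · obtain ⟨n, hn⟩ := M.reach t.1 t.2
      exact ⟨n, by rw [hFinl t n, hroot]; exact congrArg Sum.inl (Subtype.ext hn)⟩
    · obtain ⟨n, hn⟩ := M.reach (topN C) (htopD C)
      refine ⟨n + 1, ?_⟩
      rw [Function.iterate_add_apply]
      have h1 : F^[1] (Sum.inr C) = Sum.inl ⟨topN C, htopD C⟩ := rfl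
      rw [h1, hFinl _ n, hroot]
      exact congrArg Sum.inl (Subtype.ext hn)
  have htree : (ptGraph F).IsTree := ptGraph_isTree F root hFroot hreach
  -- the parts
  set part : ↥M.dom ⊕ G.ComponentCompl M.dom → Set V :=
    Sum.elim (fun t => {x | M.tle x t.1}) (fun C => {v | v ∈ C} ∪ {x | M.tle x (topN C)})
    with hpart
  have hcovers : ∀ v : V, ∃ i, v ∈ part i := by
    intro v
    by_cases hv : v ∈ M.dom
    · exact ⟨Sum.inl ⟨v, hv⟩, M.tle_refl v⟩
    · exact ⟨Sum.inr (G.componentComplMk hv), Or.inl (G.componentComplMk_mem hv)⟩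
  have hcovers_adj : ∀ ⦃a b : V⦄, G.Adj a b → ∃ i, a ∈ part i ∧ b ∈ part i := by
    intro a b hab
    by_cases ha : a ∈ M.dom <;> by_cases hb : b ∈ M.dom
    · have hint : ∀ z ∈ (SimpleGraph.Walk.cons hab SimpleGraph.Walk.nil).support,
          z ≠ a → z ≠ b → z ∉ M.dom := by
        intro z hz h1 h2
        exfalso
        rw [SimpleGraph.Walk.support_cons, List.mem_cons] at hz
        rcases hz with rfl | hz
        · exact h1 rfl
        · simp only [SimpleGraph.Walk.support_nil, List.mem_singleton] at hz
          exact h2 hz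
      rcases M.nrm a ha b hb hab.ne (SimpleGraph.Walk.cons hab SimpleGraph.Walk.nil) hint
        with h | h
      · exact ⟨Sum.inl ⟨b, hb⟩, h, M.tle_refl b⟩
      · exact ⟨Sum.inl ⟨a, ha⟩, M.tle_refl a, h⟩
    · refine ⟨Sum.inr (G.componentComplMk hb), Or.inr ?_, Or.inl (G.componentComplMk_mem hb)⟩
      exact htopMax _ a ⟨ha, b, G.componentComplMk_mem hb, hab⟩
    · refine ⟨Sum.inr (G.componentComplMk ha), Or.inl (G.componentComplMk_mem ha), Or.inr ?_⟩
      exact htopMax _ b ⟨hb, a, G.componentComplMk_mem ha, hab.symm⟩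
    · refine ⟨Sum.inr (G.componentComplMk ha), Or.inl (G.componentComplMk_mem ha), Or.inl ?_⟩
      have heq : G.componentComplMk ha = G.componentComplMk hb :=
        G.componentComplMk_eq_of_adj ha hb hab
      show b ∈ G.componentComplMk ha
      rw [heq]
      exact G.componentComplMk_mem hb
  have huniq : ∀ {i j} (p p' : (ptGraph F).Walk i j), p.IsPath → p'.IsPath → p = p' := by
    intro i j p p' hp hp'
    have h2 := SimpleGraph.isAcyclic_iff_path_unique.mp (ptGraph_acyclic F root hFroot hreach)
      (⟨p, hp⟩ : (ptGraph F).Path i j) ⟨p', hp'⟩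
    exact congrArg Subtype.val h2
  have hdesc : ∀ (t : ↥M.dom) (v : V) (hv : v ∈ M.dom), M.tle v t.1 →
      ∃ wk : (ptGraph F).Walk (Sum.inl t) (Sum.inl ⟨v, hv⟩),
        ∀ l ∈ wk.support, ∃ x : ↥M.dom, l = Sum.inl x ∧ M.tle v x.1 := by
    intro t v hv htle
    have hnt := M.tle_norm t.2 htle
    set n := M.depth t.1 - M.depth v with hn
    have hstall : ∀ i < n, F^[i] (Sum.inl t) ≠ F^[i+1] (Sum.inl t) := by
      intro i hi hEq
      rw [hFinl t i, hFinl t (i+1)] at hEq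
      have h2 : M.par^[i] t.1 = M.par^[i+1] t.1 :=
        congrArg Subtype.val (Sum.inl.inj hEq)
      have hfix : M.par (M.par^[i] t.1) = M.par^[i] t.1 := by
        conv_lhs => rw [← Function.iterate_succ_apply' M.par i t.1]
        exact h2.symm
      have hroot' : M.par^[i] t.1 = v₀ := by
        obtain ⟨m, hm⟩ := M.reach _ (M.iter_mem t.2 i)
        rw [Function.iterate_fixed hfix m] at hm
        exact hm
      have hd : M.depth (M.par^[i] t.1) = M.depth t.1 - i := M.depth_iterate t.2 (by omega)
      have hd0 : M.depth (M.par^[i] t.1) = 0 := by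
        rw [hroot']
        exact (M.depth_zero_iff M.root_mem).mpr rfl
      have h3 := hnt.2
      omega
    obtain ⟨wk, hwk⟩ := pt_walkIter F (Sum.inl t) n hstall
    have hend : F^[n] (Sum.inl t) = Sum.inl ⟨v, hv⟩ := by
      rw [hFinl t n]
      exact congrArg Sum.inl (Subtype.ext hnt.1)
    refine ⟨wk.copy rfl hend, ?_⟩
    intro l hl
    rw [SimpleGraph.Walk.support_copy] at hl
    obtain ⟨i, hi, rfl⟩ := hwk l hl
    rw [hFinl t i]
    refine ⟨⟨M.par^[i] t.1, M.iter_mem t.2 i⟩, rfl, n - i, ?_⟩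
    rw [← Function.iterate_add_apply]
    have he : n - i + i = n := by omega
    rw [he]
    exact hnt.1
  have hanchor : ∀ (v : V) (hv : v ∈ M.dom) (i), v ∈ part i →
      ∃ wk : (ptGraph F).Walk i (Sum.inl ⟨v, hv⟩), ∀ l ∈ wk.support, v ∈ part l := by
    intro v hv i hi
    rcases i with t | C
    · obtain ⟨wk, hwk⟩ := hdesc t v hv hi
      refine ⟨wk, fun l hl => ?_⟩
      obtain ⟨x, rfl, hx⟩ := hwk l hl
      exact hx
    · have htle : M.tle v (topN C) := by
        rcases hi with h | h
        · exact absurd hv (SimpleGraph.ComponentCompl.notMem_of_mem h)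
        · exact h
      obtain ⟨wk, hwk⟩ := hdesc ⟨topN C, htopD C⟩ v hv htle
      have hadjCt : (ptGraph F).Adj (Sum.inr C) (Sum.inl ⟨topN C, htopD C⟩) :=
        ⟨by simp, Or.inl rfl⟩
      refine ⟨SimpleGraph.Walk.cons hadjCt wk, ?_⟩
      intro l hl
      rw [SimpleGraph.Walk.support_cons, List.mem_cons] at hl
      rcases hl with rfl | hl
      · exact hi
      · obtain ⟨x, rfl, hx⟩ := hwk l hl
        exact hx
  have hparts_conn : ∀ (v : V) (i j), v ∈ part i → v ∈ part j →
      ∀ p : (ptGraph F).Walk i j, p.IsPath → ∀ k ∈ p.support, v ∈ part k := by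
    intro v i j hvi hvj p hp k hk
    by_cases hv : v ∈ M.dom
    · obtain ⟨wi, hwi⟩ := hanchor v hv i hvi
      obtain ⟨wj, hwj⟩ := hanchor v hv j hvj
      set W := wi.append wj.reverse with hW
      have hWsup : ∀ l ∈ W.support, v ∈ part l := by
        intro l hl
        rw [hW, SimpleGraph.Walk.mem_support_append_iff] at hl
        rcases hl with hl | hl
        · exact hwi l hl
        · rw [SimpleGraph.Walk.support_reverse, List.mem_reverse] at hl
          exact hwj l hl
      have hpeq : p = W.toPath.val := huniq p W.toPath.val hp W.toPath.2
      apply hWsup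
      rw [hpeq] at hk
      exact SimpleGraph.Walk.support_toPath_subset W hk
    · have hnode : ∀ i', v ∈ part i' → i' = Sum.inr (G.componentComplMk hv) := by
        rintro (t | C) hi'
        · exact absurd (M.tle_mem hi' t.2) hv
        · rcases hi' with h | h
          · obtain ⟨hvn, hCeq⟩ := h
            rw [← hCeq]
          · exact absurd (M.tle_mem h (htopD C)) hv
      have hij : i = j := (hnode i hvi).trans (hnode j hvj).symm
      subst hij
      have hnil : p = SimpleGraph.Walk.nil := loop_path_nil p hp
      subst hnil
      simp only [SimpleGraph.Walk.support_nil, List.mem_singleton] at hk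
      subst hk
      exact hvi
  set D : TreeDecomp G (↥M.dom ⊕ G.ComponentCompl M.dom) :=
    ⟨ptGraph F, htree, part, hcovers, hcovers_adj, hparts_conn⟩ with hD
  have hDNconn : ∀ (s : V), s ∈ M.dom → (G.induce {x | M.tle x s}).Connected := by
    intro s hs
    have hroot' : v₀ ∈ {x | M.tle x s} := ⟨M.depth s, M.depth_spec hs⟩
    rw [SimpleGraph.connected_iff]
    constructor
    · have key : ∀ n (x : V) (hx : M.tle x s), M.depth x = n →
          (G.induce {x | M.tle x s}).Reachable ⟨x, hx⟩ ⟨v₀, hroot'⟩ := by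
        intro n
        induction n with
        | zero =>
          intro x hx hd
          have hx0 : x = v₀ := (M.depth_zero_iff (M.tle_mem hx hs)).mp hd
          have hsub : (⟨x, hx⟩ : {x // x ∈ {x | M.tle x s}}) = ⟨v₀, hroot'⟩ := Subtype.ext hx0
          rw [hsub]
        | succ m ih =>
          intro x hx hd
          have hxd : x ∈ M.dom := M.tle_mem hx hs
          have hxne : x ≠ v₀ := by
            intro h
            rw [h, (M.depth_zero_iff M.root_mem).mpr rfl] at hd
            omega
          have hpadj : G.Adj (M.par x) x := M.par_adj x hxd hxne
          have hptle : M.tle (M.par x) s := M.tle_trans ⟨1, by simp⟩ hx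
          have hpd : M.depth (M.par x) = m := by
            have := M.depth_par hxd hxne
            omega
          have hstep : (G.induce {x | M.tle x s}).Adj ⟨x, hx⟩ ⟨M.par x, hptle⟩ := hpadj.symm
          exact (hstep.reachable).trans (ih (M.par x) hptle hpd)
      intro a b
      exact (key _ a.1 a.2 rfl).trans (key _ b.1 b.2 rfl).symm
    · exact ⟨⟨v₀, hroot'⟩⟩
  refine ⟨↥M.dom ⊕ G.ComponentCompl M.dom, D, ?_, ?_, ?_, ?_⟩
  · -- rayless
    rintro ⟨R, hinj, hadjR⟩
    obtain ⟨N, hN⟩ := ptGraph_ray F root hFroot hreach R hinj hadjR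
    have hinlall : ∀ k, ∃ t : ↥M.dom, R (N + k) = Sum.inl t := by
      intro k
      have h1 : F (R (N + k + 1)) = R (N + k) := hN (N + k) (by omega)
      rw [← h1]
      rcases R (N + k + 1) with t | C
      · exact ⟨_, rfl⟩
      · exact ⟨_, rfl⟩
    choose tf htf using hinlall
    apply hnasc (fun k => (tf k).1) (fun k => (tf k).2)
    intro k
    have h1 : F (R (N + k + 1)) = R (N + k) := hN (N + k) (by omega)
    have htf' : R (N + k + 1) = Sum.inl (tf (k+1)) := by
      have h2 := htf (k+1)
      rw [show N + (k+1) = N + k + 1 from by omega] at h2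
      exact h2
    rw [htf', htf k] at h1
    have h2 : M.par (tf (k+1)).1 = (tf k).1 := by
      simp only [hF, Sum.elim_inl] at h1
      exact congrArg Subtype.val (Sum.inl.inj h1)
    constructor
    · exact ⟨1, by simpa using h2⟩
    · intro hEq
      have h3 : R (N + k) = R (N + k + 1) := by
        rw [htf', htf k]
        exact congrArg Sum.inl (Subtype.ext hEq)
      have := hinj h3
      omega
  · -- finite U in parts
    rintro (t | C)
    · exact (M.dn_finite t.2).subset (fun x hx => hx.1)
    · apply (M.dn_finite (htopD C)).subset
      rintro x ⟨hx, hxU⟩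
      rcases hx with h | h
      · exact absurd (hMU hxU) (SimpleGraph.ComponentCompl.notMem_of_mem h)
      · exact h
  · -- non-leaf parts finite
    rintro (t | C) hleaf
    · exact M.dn_finite t.2
    · exfalso
      apply hleaf
      intro s1 hs1 s2 hs2
      have hkey : ∀ s, (ptGraph F).Adj (Sum.inr C) s → s = Sum.inl ⟨topN C, htopD C⟩ := by
        rintro s hs
        rcases hs.2 with h | h
        · exact h.symm
        · exfalso
          rcases s with t' | C'
          · simp only [hF, Sum.elim_inl] at h
            exact Sum.inl_ne_inr h
          · simp only [hF, Sum.elim_inr] at h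
            exact Sum.inl_ne_inr h
      rw [hkey s1 hs1, hkey s2 hs2]
  · -- connected separators
    intro i j hadj
    have hsep : ∃ (s : V) (_ : s ∈ M.dom), D.sep i j = {x | M.tle x s} := by
      rcases i with t | C <;> rcases j with t' | C'
      · rcases hadj.2 with h | h
        · have hpt : M.par t.1 = t'.1 := by
            simp only [hF, Sum.elim_inl] at h
            exact congrArg Subtype.val (Sum.inl.inj h)
          refine ⟨t'.1, t'.2, ?_⟩
          ext x
          constructor
          · rintro ⟨-, h2⟩
            exact h2
          · intro hx
            exact ⟨M.tle_trans hx ⟨1, by simpa using hpt⟩, hx⟩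
        · have hpt : M.par t'.1 = t.1 := by
            simp only [hF, Sum.elim_inl] at h
            exact congrArg Subtype.val (Sum.inl.inj h)
          refine ⟨t.1, t.2, ?_⟩
          ext x
          constructor
          · rintro ⟨h2, -⟩
            exact h2
          · intro hx
            exact ⟨hx, M.tle_trans hx ⟨1, by simpa using hpt⟩⟩
      · rcases hadj.2 with h | h
        · exfalso
          simp only [hF, Sum.elim_inl] at h
          exact Sum.inl_ne_inr h
        · have hpt : topN C' = t.1 := by
            simp only [hF, Sum.elim_inr] at h
            exact congrArg Subtype.val (Sum.inl.inj h)
          refine ⟨t.1, t.2, ?_⟩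
          ext x
          constructor
          · rintro ⟨h2, -⟩
            exact h2
          · intro hx
            refine ⟨hx, Or.inr ?_⟩
            rw [hpt]
            exact hx
      · rcases hadj.2 with h | h
        · have hpt : topN C = t'.1 := by
            simp only [hF, Sum.elim_inr] at h
            exact congrArg Subtype.val (Sum.inl.inj h)
          refine ⟨t'.1, t'.2, ?_⟩
          ext x
          constructor
          · rintro ⟨-, h2⟩
            exact h2
          · intro hx
            refine ⟨Or.inr ?_, hx⟩
            rw [hpt]
            exact hx
        · exfalso
          simp only [hF, Sum.elim_inl] at h
          exact Sum.inl_ne_inr h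
      · exfalso
        rcases hadj.2 with h | h
        · simp only [hF, Sum.elim_inr] at h
          exact Sum.inl_ne_inr h
        · simp only [hF, Sum.elim_inr] at h
          exact Sum.inl_ne_inr h
    obtain ⟨s, hs, hseq⟩ := hsep
    rw [hseq]
    exact hDNconn s hs

end DirB


/-- **Duality theorem for combs in terms of tree-decompositions** (Theorem 3.1).
Exactly one of the following holds: (i) `G` contains a comb attached to `U`; (ii) `G` has a
rayless tree-decomposition into parts each containing at most finitely many vertices from
`U` and whose parts at non-leaves are all finite.  Moreover, the tree-decomposition in (ii)
can be chosen with connected separators. -/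
theorem comb_duality_treeDecomp {V : Type u} (G : SimpleGraph V)
    (hG : G.Connected) (U : Set V) :
    Xor' (HasComb G U)
        (∃ (ι : Type u) (D : TreeDecomp G ι), RaylessTree D.tree ∧
          (∀ t, (D.part t ∩ U).Finite) ∧
          (∀ t, ¬ IsLeafNode D.tree t → (D.part t).Finite)) ∧
      (¬ HasComb G U →
        ∃ (ι : Type u) (D : TreeDecomp G ι), RaylessTree D.tree ∧
          (∀ t, (D.part t ∩ U).Finite) ∧
          (∀ t, ¬ IsLeafNode D.tree t → (D.part t).Finite) ∧
          D.ConnSeps) := by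
  have hmain := dirB G hG U
  constructor
  · by_cases h : HasComb G U
    · refine Or.inl ⟨h, ?_⟩
      rintro ⟨ι', D, h1, h2, h3⟩
      exact dirA h D h1 h2 h3
    · obtain ⟨ι', D, h1, h2, h3, h4⟩ := hmain h
      exact Or.inr ⟨⟨ι', D, h1, h2, h3⟩, h⟩
  · intro h
    obtain ⟨ι', D, h1, h2, h3, h4⟩ := hmain h
    exact ⟨ι', D, h1, h2, h3, h4⟩

end StarsCombs
end

section
/- Let G be any graph. If T ⊆ G is a rooted tree that contains a vertex set W cofinally, then the set of ends of G lying in the closure of V(T) equals the set of ends of G lying in the closure of W, i.e. ∂_Ω T = ∂_Ω W. -/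
/-! Basic notions for the theory of stars and combs in infinite graphs. -/

universe u

open SimpleGraph

namespace StarsCombs

variable {V : Type u} {ι : Type u}

/-! ### Auxiliary material for Lemma 2.4 -/

/-- Trim a path so that it meets the spine only in its first vertex. -/
private lemma trim_lemma {V : Type u} {G : SimpleGraph V} (sp : ℕ → V) :
    ∀ (L : ℕ) {a b : V} (q : G.Walk a b), q.length ≤ L → q.IsPath → a ∈ Set.range sp →
      ∃ (m : ℕ) (q' : G.Walk (sp m) b), q'.IsPath ∧ (∀ x ∈ q'.support, x ∈ q.support) ∧
        (∀ x ∈ q'.support, x ∈ Set.range sp → x = sp m) := by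
  classical
  intro L
  induction L with
  | zero =>
    intro a b q hl hq ha
    by_cases hall : ∀ x ∈ q.support, x ∈ Set.range sp → x = a
    · obtain ⟨m, rfl⟩ := ha
      exact ⟨m, q, hq, fun x hx => hx, hall⟩
    · exfalso
      push_neg at hall
      obtain ⟨x, hxs, hxr, hxa⟩ := hall
      have hlen : (q.takeUntil x hxs).length + (q.dropUntil x hxs).length = q.length := by
        rw [← Walk.length_append, Walk.take_spec]
      have htne : (q.takeUntil x hxs).length ≠ 0 :=
        fun h => hxa (Walk.eq_of_length_eq_zero h).symm
      omega
  | succ L ih =>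
    intro a b q hl hq ha
    by_cases hall : ∀ x ∈ q.support, x ∈ Set.range sp → x = a
    · obtain ⟨m, rfl⟩ := ha
      exact ⟨m, q, hq, fun x hx => hx, hall⟩
    · push_neg at hall
      obtain ⟨x, hxs, hxr, hxa⟩ := hall
      have hlen : (q.takeUntil x hxs).length + (q.dropUntil x hxs).length = q.length := by
        rw [← Walk.length_append, Walk.take_spec]
      have htne : (q.takeUntil x hxs).length ≠ 0 :=
        fun h => hxa (Walk.eq_of_length_eq_zero h).symm
      obtain ⟨m, q', hq'p, hq's, hq'sp⟩ :=
        ih (q.dropUntil x hxs) (by omega) (hq.dropUntil hxs) hxr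
      exact ⟨m, q', hq'p, fun y hy => q.support_dropUntil_subset hxs (hq's y hy), hq'sp⟩

/-- The data of one attachment path of the comb being constructed. -/
private structure AuxPath {V : Type u} (G : SimpleGraph V) (W : Set V) (sp : ℕ → V)
    (F : Finset V) where
  m : ℕ
  w : V
  q : G.Walk (sp m) w
  hw : w ∈ W
  hpath : q.IsPath
  havoid : ∀ x ∈ q.support, x ∉ F
  hspine : ∀ x ∈ q.support, x ∈ Set.range sp → x = sp m

private lemma step_lemma {V : Type u} {G : SimpleGraph V} (T : RootedTree G) (W : Set V)
    (hW : T.ContainsCofinally W) (c : Comb G T.sub.verts) (F : Finset V) :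
    Nonempty (AuxPath G W c.spine F) := by
  classical
  -- the teeth are pairwise distinct
  have hti : Function.Injective c.tooth := by
    intro m n hmn
    by_contra hne
    have h1 : c.tooth m ∈ (c.path n).support := by
      rw [hmn]; exact (c.path n).end_mem_support
    exact c.paths_disjoint m n hne _ (c.path m).end_mem_support h1
  -- down-closures in the tree are finite
  have hDfin : ∀ v : V, {x | T.tle x v}.Finite := by
    intro v
    by_cases hv : v ∈ T.sub.verts
    · obtain ⟨p0⟩ := T.isTree.isConnected.preconnected ⟨T.root, T.root_mem⟩ ⟨v, hv⟩
      refine Set.Finite.subset (List.finite_toSet (p0.bypass.support.map Subtype.val)) ?_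
      rintro x ⟨hx, hy, hp⟩
      have hmem : (⟨x, hx⟩ : T.sub.verts) ∈ p0.bypass.support :=
        hp p0.bypass p0.bypass_isPath
      exact List.mem_map.mpr ⟨⟨x, hx⟩, hmem, rfl⟩
    · have : {x | T.tle x v} = ∅ := by
        ext x
        simp only [Set.mem_setOf_eq, Set.mem_empty_iff_false, iff_false]
        rintro ⟨hx, hy, -⟩
        exact hv hy
      rw [this]; exact Set.finite_empty
  -- only finitely many teeth lie below a vertex of `F`
  have hB1 : {n | ∃ v ∈ F, T.tle (c.tooth n) v}.Finite := by
    have hfin : (⋃ v ∈ (F : Set V), {x | T.tle x v}).Finite :=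
      F.finite_toSet.biUnion fun v _ => hDfin v
    have hsub : {n | ∃ v ∈ F, T.tle (c.tooth n) v} ⊆
        c.tooth ⁻¹' (⋃ v ∈ (F : Set V), {x | T.tle x v}) := by
      rintro k ⟨v, hv, hvk⟩
      exact Set.mem_biUnion (Finset.mem_coe.mpr hv) hvk
    exact (hfin.preimage hti.injOn).subset hsub
  -- only finitely many comb paths meet `F`
  have hB2 : {n | ∃ x ∈ (c.path n).support, x ∈ F}.Finite := by
    have hsub : {n | ∃ x ∈ (c.path n).support, x ∈ F} ⊆
        ⋃ x ∈ (F : Set V), {k | x ∈ (c.path k).support} := by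
      rintro k ⟨x, hx, hxF⟩
      exact Set.mem_biUnion (Finset.mem_coe.mpr hxF) hx
    refine (Set.Finite.biUnion F.finite_toSet fun x _ => ?_).subset hsub
    exact Set.Subsingleton.finite fun a ha b hb => by
      by_contra hne
      exact c.paths_disjoint a b hne x ha hb
  -- choose a good tooth
  obtain ⟨n, hn⟩ := ((hB1.union hB2).infinite_compl).nonempty
  have hn1 : ¬ ∃ v ∈ F, T.tle (c.tooth n) v := fun h => hn (Set.mem_union_left _ h)
  have hn2 : ¬ ∃ x ∈ (c.path n).support, x ∈ F := fun h => hn (Set.mem_union_right _ h)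
  -- find a vertex of `W` above the tooth, and the ascending tree path to it
  obtain ⟨w, hwW, htw⟩ := hW.2 (c.tooth n) (c.tooth_mem n)
  obtain ⟨ht', hw', hall⟩ := htw
  obtain ⟨w0'⟩ := T.isTree.isConnected.preconnected ⟨T.root, T.root_mem⟩ ⟨w, hw'⟩
  set w0 := w0'.bypass with hw0def
  have hw0 : w0.IsPath := w0'.bypass_isPath
  have htmem : (⟨c.tooth n, ht'⟩ : T.sub.verts) ∈ w0.support := hall w0 hw0
  set p2 := w0.dropUntil _ htmem with hp2def
  have hp2 : p2.IsPath := hw0.dropUntil htmem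
  -- the ascending path avoids `F`
  have hp2F : ∀ x ∈ p2.support, (x : V) ∉ F := by
    intro x hx hxF
    apply hn1
    refine ⟨(x : V), hxF, ht', x.2, ?_⟩
    intro p hp
    -- build one root–x path through the tooth
    have hq'eq : ((w0.takeUntil _ htmem).append (p2.takeUntil x hx)).append
        (p2.dropUntil x hx) = w0 := by
      rw [← Walk.append_assoc, Walk.take_spec, hp2def, Walk.take_spec]
    have hq'p : ((w0.takeUntil _ htmem).append (p2.takeUntil x hx)).IsPath := by
      apply Walk.IsPath.of_append_left (q := p2.dropUntil x hx)
      rw [hq'eq]; exact hw0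
    have huniq := T.isTree.IsAcyclic.path_unique
      (⟨p, hp⟩ : T.sub.coe.Path _ _) ⟨_, hq'p⟩
    have hpe : p = (w0.takeUntil _ htmem).append (p2.takeUntil x hx) :=
      congrArg Subtype.val huniq
    rw [hpe, Walk.mem_support_append_iff]
    exact Or.inl (Walk.end_mem_support _)
  -- transfer to `G` and attach to the comb path
  have hPp : (p2.map T.sub.hom).IsPath :=
    Walk.map_isPath_of_injective Subgraph.hom_injective hp2
  set Q := ((c.path n).append (p2.map T.sub.hom)).bypass with hQdef
  have hQp : Q.IsPath := Walk.bypass_isPath _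
  have hQs : ∀ x ∈ Q.support, x ∈ (c.path n).support ∨ x ∈ (p2.map T.sub.hom).support := by
    intro x hx
    have hx' := Walk.support_bypass_subset _ hx
    exact (Walk.mem_support_append_iff _ _).mp hx'
  have hQF : ∀ x ∈ Q.support, x ∉ F := by
    intro x hx hxF
    rcases hQs x hx with h | h
    · exact hn2 ⟨x, h, hxF⟩
    · rw [Walk.support_map] at h
      obtain ⟨y, hy, rfl⟩ := List.mem_map.mp h
      exact hp2F y hy hxF
  obtain ⟨m, q', hq'p, hq's, hq'spine⟩ :=
    trim_lemma c.spine Q.length Q le_rfl hQp ⟨c.start n, rfl⟩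
  exact ⟨⟨m, w, q', hwW, hq'p, fun x hx hxF => hQF x (hq's x hx) hxF, hq'spine⟩⟩

/-- If `T ⊆ G` is a rooted tree that contains the vertex set `W` cofinally, then the ends of
`G` in the closure of `V(T)` are exactly the ends of `G` in the closure of `W`, i.e.
`∂_Ω T = ∂_Ω W` (Lemma 2.4). -/
theorem closure_eq_closure_of_containsCofinally {V : Type u} (G : SimpleGraph V)
    (T : RootedTree G) (W : Set V) (hW : T.ContainsCofinally W) :
    ∀ r, IsRay G r → (InClosure G T.sub.verts r ↔ InClosure G W r) := by
  classical
  intro r hr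
  constructor
  · rintro ⟨c, hc⟩
    -- construct a comb attached to `W` with the same spine
    let g : (F : Finset V) → AuxPath G W c.spine F := fun F => (step_lemma T W hW c F).some
    let A : ℕ → Finset V := fun k =>
      Nat.rec ∅ (fun _ Fk => Fk ∪ (g Fk).q.support.toFinset) k
    have hA : ∀ k, A (k + 1) = A k ∪ (g (A k)).q.support.toFinset := fun k => rfl
    have hmono : ∀ j k, j ≤ k → A j ⊆ A k := by
      intro j k hjk
      induction hjk with
      | refl => exact Finset.Subset.refl _
      | step _ ih => exact ih.trans Finset.subset_union_left
    have hsupp : ∀ j, ∀ x ∈ (g (A j)).q.support, x ∈ A (j + 1) := by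
      intro j x hx
      rw [hA]
      exact Finset.mem_union_right _ (List.mem_toFinset.mpr hx)
    have hdisj : ∀ j k, j < k → ∀ x ∈ (g (A j)).q.support, x ∉ (g (A k)).q.support := by
      intro j k hjk x hxj hxk
      exact (g (A k)).havoid x hxk (hmono (j + 1) k hjk (hsupp j x hxj))
    refine ⟨⟨c.spine, c.spine_ray, fun k => (g (A k)).m, fun k => (g (A k)).w,
      fun k => (g (A k)).hw, fun k => (g (A k)).q, fun k => (g (A k)).hpath,
      fun k => (g (A k)).hspine, ?_⟩, hc⟩
    intro a b hab x hxa hxb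
    rcases lt_or_gt_of_ne hab with h | h
    · exact hdisj a b h x hxa hxb
    · exact hdisj b a h x hxb hxa
  · rintro ⟨c, hc⟩
    exact ⟨⟨c.spine, c.spine_ray, c.start, c.tooth, fun k => hW.1 (c.tooth_mem k), c.path,
      c.path_isPath, c.meets_spine, c.paths_disjoint⟩, hc⟩


end StarsCombs
end
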